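/- arXiv:1612.02407 — 8 statements merged into one kernel-verified Lean document; each statement's English description precedes it below -/
import Mathlib

section
/- Let Y be a symmetric real random variable with all moments finite and let l ≥ 1 be an integer. Then E|1+Y|^{2l} ≥ 1 + Σ_{r=1}^{l} ((l/r)·‖Y‖_{2r})^{2r}, where ‖Y‖_q = (E|Y|^q)^{1/q}. -/
open MeasureTheory ProbabilityTheory Finset

lemma aux_choose (l r : ℕ) (hrl : r ≤ l) :
    ((l : ℝ) / r) ^ (2 * r) ≤ ((2 * l).choose (2 * r) : ℝ) := by
  rcases Nat.eq_zero_or_pos r with hr0 | hr0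
  · simp [hr0]
  have hnat : l ^ (2 * r) ≤ r ^ (2 * r) * (2 * l).choose (2 * r) := by
    have h1 : ∏ i ∈ range (2 * r), (l * (2 * r - i)) ≤ ∏ i ∈ range (2 * r), (r * (2 * l - i)) := by
      refine Finset.prod_le_prod' fun i _ => ?_
      rw [Nat.mul_sub, Nat.mul_sub]
      have e : l * (2 * r) = r * (2 * l) := by ring
      rw [e]
      exact Nat.sub_le_sub_left (Nat.mul_le_mul_right _ hrl) _
    rw [Finset.prod_mul_distrib, Finset.prod_mul_distrib, Finset.prod_const, Finset.prod_const,
      Finset.card_range, ← Nat.descFactorial_eq_prod_range, ← Nat.descFactorial_eq_prod_range,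
      Nat.descFactorial_self, Nat.descFactorial_eq_factorial_mul_choose] at h1
    have h2 : l ^ (2 * r) * (2 * r).factorial
        ≤ r ^ (2 * r) * (2 * l).choose (2 * r) * (2 * r).factorial := by
      calc l ^ (2 * r) * (2 * r).factorial
          ≤ r ^ (2 * r) * ((2 * r).factorial * (2 * l).choose (2 * r)) := h1
        _ = r ^ (2 * r) * (2 * l).choose (2 * r) * (2 * r).factorial := by ring
    exact Nat.le_of_mul_le_mul_right h2 (Nat.factorial_pos _)
  have hrR : (0 : ℝ) < (r : ℝ) ^ (2 * r) := by positivity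
  rw [div_pow, div_le_iff₀ hrR]
  calc ((l : ℝ) ^ (2 * r)) = ((l ^ (2 * r) : ℕ) : ℝ) := by push_cast; ring
    _ ≤ ((r ^ (2 * r) * (2 * l).choose (2 * r) : ℕ) : ℝ) := by exact_mod_cast hnat
    _ = ((2 * l).choose (2 * r) : ℝ) * (r : ℝ) ^ (2 * r) := by push_cast; ring

/-- If `Y` is symmetric with all moments finite and `l ≥ 1`, then
`E|1+Y|^{2l} ≥ 1 + ∑_{r=1}^{l} ((l/r)·‖Y‖_{2r})^{2r}`. -/
theorem stmt1 {Ω : Type*} [MeasureSpace Ω] [IsProbabilityMeasure (ℙ : Measure Ω)]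
    (Y : Ω → ℝ) (hY : Measurable Y)
    (hsymm : IdentDistrib Y (fun ω => -Y ω))
    (hmom : ∀ n : ℕ, Integrable (fun ω => |Y ω| ^ n))
    (l : ℕ) (hl : 1 ≤ l) :
    1 + ∑ r ∈ Finset.Icc 1 l,
        ((l / r : ℝ) * (∫ ω, |Y ω| ^ (2 * r)) ^ ((1 : ℝ) / (2 * r))) ^ (2 * r)
      ≤ ∫ ω, |1 + Y ω| ^ (2 * l) := by
  classical
  -- integrability of powers
  have hint : ∀ k : ℕ, Integrable (fun ω => Y ω ^ k) := by
    intro k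
    refine (hmom k).mono' (hY.pow_const k).aestronglyMeasurable ?_
    filter_upwards with ω
    simp [abs_pow]
  -- odd moments vanish
  have hodd : ∀ k : ℕ, Odd k → ∫ ω, Y ω ^ k = 0 := by
    intro k hk
    have h1 : IdentDistrib (fun ω => Y ω ^ k) (fun ω => (-Y ω) ^ k) :=
      hsymm.comp (measurable_id.pow_const k)
    have h2 := h1.integral_eq
    have h3 : (∫ ω, Y ω ^ k) = - ∫ ω, Y ω ^ k := by
      calc (∫ ω, Y ω ^ k) = ∫ ω, (-Y ω) ^ k := h2
        _ = ∫ ω, -(Y ω ^ k) := by simp [hk.neg_pow]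
        _ = - ∫ ω, Y ω ^ k := integral_neg _
    linarith
  -- even moments as absolute moments
  have heven : ∀ m : ℕ, (∫ ω, Y ω ^ (2 * m)) = ∫ ω, |Y ω| ^ (2 * m) := by
    intro m
    congr 1 with ω
    rw [pow_mul, pow_mul, sq_abs]
  set g : ℕ → ℝ := fun k => (∫ ω, Y ω ^ k) * ((2 * l).choose k : ℝ) with hg
  have hg0 : g 0 = 1 := by simp [hg]
  have hgeven : ∀ m : ℕ, 0 ≤ g (2 * m) := by
    intro m
    have h1 : 0 ≤ ∫ ω, Y ω ^ (2 * m) := by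
      refine integral_nonneg fun ω => ?_
      rw [pow_mul]
      exact pow_nonneg (sq_nonneg _) _
    exact mul_nonneg h1 (Nat.cast_nonneg _)
  -- the integral equals the binomial sum
  have habs : (fun ω => |1 + Y ω| ^ (2 * l))
      = fun ω => ∑ k ∈ range (2 * l + 1), Y ω ^ k * ((2 * l).choose k : ℝ) := by
    funext ω
    rw [pow_mul, sq_abs, ← pow_mul, add_comm, add_pow]
    simp
  have hInt : (∫ ω, |1 + Y ω| ^ (2 * l)) = ∑ k ∈ range (2 * l + 1), g k := by
    rw [habs, integral_finset_sum _ (fun k _ => (hint k).mul_const _)]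
    exact Finset.sum_congr rfl fun k _ => integral_mul_const _ _
  -- restrict to even indices
  have hchain : ∑ r ∈ range (l + 1), g (2 * r) ≤ ∑ k ∈ range (2 * l + 1), g k := by
    rw [← Finset.sum_image (g := fun r => 2 * r) (fun x _ y _ h => by dsimp at h; omega)]
    refine Finset.sum_le_sum_of_subset_of_nonneg ?_ ?_
    · intro k hk
      simp only [Finset.mem_image, Finset.mem_range] at hk ⊢
      omega
    · intro k hk hk'
      rcases Nat.even_or_odd k with ⟨m, hm⟩ | hko
      · have : k = 2 * m := by omega
        rw [this]; exact hgeven m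
      · rw [hg]
        simp [hodd k hko]
  have hsplit : ∑ r ∈ range (l + 1), g (2 * r) = g 0 + ∑ r ∈ Icc 1 l, g (2 * r) := by
    rw [Finset.sum_range_succ' (fun r => g (2 * r)) l]
    rw [← Finset.Ico_add_one_right_eq_Icc, Finset.sum_Ico_eq_sum_range]
    simp only [Nat.add_sub_cancel, mul_zero, Nat.mul_add, Nat.mul_one]
    rw [add_comm]
    congr 1
    refine Finset.sum_congr rfl fun i _ => ?_
    congr 1
    omega
  -- termwise bound
  have hterm : ∀ r ∈ Icc 1 l,
      ((l / r : ℝ) * (∫ ω, |Y ω| ^ (2 * r)) ^ ((1 : ℝ) / (2 * r))) ^ (2 * r) ≤ g (2 * r) := by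
    intro r hr
    rw [Finset.mem_Icc] at hr
    obtain ⟨hr1, hrl⟩ := hr
    set X := ∫ ω, |Y ω| ^ (2 * r) with hX
    have hX0 : 0 ≤ X := integral_nonneg fun ω => pow_nonneg (abs_nonneg _) _
    have hr0 : ((r : ℝ)) ≠ 0 := by positivity
    have hXpow : (X ^ ((1 : ℝ) / (2 * r))) ^ (2 * r) = X := by
      rw [← Real.rpow_natCast (X ^ ((1 : ℝ) / (2 * (r : ℝ)))) (2 * r), ← Real.rpow_mul hX0]
      have : ((1 : ℝ) / (2 * r)) * ((2 * r : ℕ) : ℝ) = 1 := by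
        push_cast
        field_simp
      rw [this, Real.rpow_one]
    calc ((l / r : ℝ) * X ^ ((1 : ℝ) / (2 * r))) ^ (2 * r)
        = ((l : ℝ) / r) ^ (2 * r) * X := by rw [mul_pow, hXpow]
      _ ≤ ((2 * l).choose (2 * r) : ℝ) * X :=
          mul_le_mul_of_nonneg_right (aux_choose l r hrl) hX0
      _ = g (2 * r) := by rw [hg]; dsimp only; rw [heven r, ← hX]; ring
  calc 1 + ∑ r ∈ Finset.Icc 1 l,
        ((l / r : ℝ) * (∫ ω, |Y ω| ^ (2 * r)) ^ ((1 : ℝ) / (2 * r))) ^ (2 * r)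
      ≤ g 0 + ∑ r ∈ Icc 1 l, g (2 * r) := by
        rw [hg0]
        exact add_le_add (le_refl 1) (Finset.sum_le_sum hterm)
    _ = ∑ r ∈ range (l + 1), g (2 * r) := hsplit.symm
    _ ≤ ∑ k ∈ range (2 * l + 1), g k := hchain
    _ = ∫ ω, |1 + Y ω| ^ (2 * l) := hInt.symm
end

section
/- Let X be a real random variable such that ‖X‖_{2p} ≤ α·‖X‖_p for every p ≥ 2, where α ≥ 1. Then for all q ≥ p ≥ 2, ‖X‖_q ≤ α·(q/p)^{log₂ α}·‖X‖_p. -/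
open MeasureTheory ProbabilityTheory

-- a^{log_b c} = c^{log_b a}
lemma rpow_logb_comm {a b c : ℝ} (ha : 0 < a) (hc : 0 < c) :
    a ^ Real.logb b c = c ^ Real.logb b a := by
  rw [Real.rpow_def_of_pos ha, Real.rpow_def_of_pos hc, Real.logb, Real.logb]
  ring_nf

section
variable {Ω : Type*} [MeasureSpace Ω] [IsProbabilityMeasure (ℙ : Measure Ω)]

omit [IsProbabilityMeasure (ℙ : Measure Ω)] in
lemma memLp_of_int {X : Ω → ℝ} (hX : Measurable X) {r : ℝ} (hr : 0 < r)
    (h : Integrable (fun ω => |X ω| ^ r)) : MemLp X (ENNReal.ofReal r) ℙ := by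
  have hr0 : ENNReal.ofReal r ≠ 0 := by simp [hr, hr.le]
  have := (memLp_norm_rpow_iff (μ := (ℙ : Measure Ω)) (q := ENNReal.ofReal r) (p := ENNReal.ofReal r)
    hX.aestronglyMeasurable hr0 ENNReal.ofReal_ne_top)
  rw [ENNReal.div_self hr0 ENNReal.ofReal_ne_top] at this
  rw [← this, memLp_one_iff_integrable]
  simpa [Real.norm_eq_abs, ENNReal.toReal_ofReal hr.le] using h

lemma mono_lemma {X : Ω → ℝ} (hX : Measurable X) {r s : ℝ} (hr : 0 < r) (hrs : r ≤ s)
    (hs : MemLp X (ENNReal.ofReal s) ℙ) :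
    (∫ ω, |X ω| ^ r) ^ (1 / r) ≤ (∫ ω, |X ω| ^ s) ^ (1 / s) := by
  have hs' : 0 < s := hr.trans_le hrs
  have hrmem : MemLp X (ENNReal.ofReal r) ℙ :=
    hs.mono_exponent (ENNReal.ofReal_le_ofReal hrs)
  have h1 := hrmem.eLpNorm_eq_integral_rpow_norm (by simp [hr, hr.le]) ENNReal.ofReal_ne_top
  have h2 := hs.eLpNorm_eq_integral_rpow_norm (by simp [hs', hs'.le]) ENNReal.ofReal_ne_top
  have hle := eLpNorm_le_eLpNorm_of_exponent_le (μ := (ℙ : Measure Ω))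
    (ENNReal.ofReal_le_ofReal hrs) hX.aestronglyMeasurable
  rw [h1, h2] at hle
  rw [ENNReal.ofReal_le_ofReal_iff (by positivity)] at hle
  simpa [Real.norm_eq_abs, ENNReal.toReal_ofReal hr.le, ENNReal.toReal_ofReal hs'.le,
    one_div] using hle

end

/-- If `‖X‖_{2p} ≤ α‖X‖_p` for all `p ≥ 2` then
`‖X‖_q ≤ α (q/p)^{log₂ α} ‖X‖_p` for all `q ≥ p ≥ 2`. -/
theorem stmt2 {Ω : Type*} [MeasureSpace Ω] [IsProbabilityMeasure (ℙ : Measure Ω)]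
    (X : Ω → ℝ) (hX : Measurable X) (α : ℝ) (hα : 1 ≤ α)
    (hmom : ∀ p : ℝ, 2 ≤ p → Integrable (fun ω => |X ω| ^ p))
    (hdouble : ∀ p : ℝ, 2 ≤ p →
      (∫ ω, |X ω| ^ (2 * p)) ^ (1 / (2 * p)) ≤ α * (∫ ω, |X ω| ^ p) ^ (1 / p)) :
    ∀ p q : ℝ, 2 ≤ p → p ≤ q →
      (∫ ω, |X ω| ^ q) ^ (1 / q)
        ≤ α * (q / p) ^ Real.logb 2 α * (∫ ω, |X ω| ^ p) ^ (1 / p) := by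
  intro p q hp hpq
  set N : ℝ → ℝ := fun r => (∫ ω, |X ω| ^ r) ^ (1 / r) with hN
  have hNnonneg : ∀ r : ℝ, 0 ≤ N r := fun r => by
    apply Real.rpow_nonneg
    exact integral_nonneg fun ω => Real.rpow_nonneg (abs_nonneg _) _
  have hα0 : (0:ℝ) < α := lt_of_lt_of_le one_pos hα
  -- iterate doubling
  have key : ∀ n : ℕ, N (2 ^ n * p) ≤ α ^ n * N p := by
    intro n
    induction n with
    | zero => simp [hN]
    | succ n ih =>
      have h2np : 2 ≤ 2 ^ n * p := by
        calc (2:ℝ) = 1 * 2 := by ring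
        _ ≤ 2 ^ n * p := by
          apply mul_le_mul (one_le_pow₀ one_le_two) hp (by norm_num)
          positivity
      have heq : (2:ℝ) ^ (n+1) * p = 2 * (2 ^ n * p) := by ring
      calc N (2 ^ (n+1) * p) = N (2 * (2 ^ n * p)) := by rw [heq]
        _ ≤ α * N (2 ^ n * p) := hdouble _ h2np
        _ ≤ α * (α ^ n * N p) := by
            apply mul_le_mul_of_nonneg_left ih hα0.le
        _ = α ^ (n+1) * N p := by ring
  -- choose n
  have hp0 : (0:ℝ) < p := lt_of_lt_of_le two_pos hp
  have hq0 : (0:ℝ) < q := hp0.trans_le hpq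
  have hqp1 : (1:ℝ) ≤ q / p := (one_le_div hp0).mpr hpq
  set L : ℝ := Real.logb 2 (q / p) with hL
  have hL0 : 0 ≤ L := Real.logb_nonneg one_lt_two hqp1
  set n : ℕ := ⌈L⌉₊ with hn
  have hqle : q ≤ 2 ^ n * p := by
    have : q / p ≤ (2:ℝ) ^ (n:ℝ) := by
      rw [← Real.rpow_logb two_pos (by norm_num) (lt_of_lt_of_le one_pos hqp1)]
      exact Real.rpow_le_rpow_of_exponent_le one_le_two (Nat.le_ceil L)
    rw [Real.rpow_natCast] at this
    calc q = (q / p) * p := by field_simp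
    _ ≤ 2 ^ n * p := mul_le_mul_of_nonneg_right this hp0.le
  have h2np2 : 2 ≤ 2 ^ n * p := by
    calc (2:ℝ) = 1 * 2 := by ring
    _ ≤ 2 ^ n * p := mul_le_mul (one_le_pow₀ one_le_two) hp (by norm_num) (by positivity)
  have hmono : N q ≤ N (2 ^ n * p) :=
    mono_lemma hX hq0 hqle (memLp_of_int hX (lt_of_lt_of_le two_pos h2np2) (hmom _ h2np2))
  have hαn : (α : ℝ) ^ n ≤ α * (q / p) ^ Real.logb 2 α := by
    have h1 : (α:ℝ) ^ n = α ^ (n:ℝ) := (Real.rpow_natCast α n).symm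
    have h2 : (n:ℝ) ≤ L + 1 := le_of_lt (Nat.ceil_lt_add_one hL0)
    calc (α:ℝ) ^ n = α ^ (n:ℝ) := h1
      _ ≤ α ^ (L + 1) := Real.rpow_le_rpow_of_exponent_le hα h2
      _ = α * α ^ L := by rw [Real.rpow_add hα0, Real.rpow_one]; ring
      _ = α * (q / p) ^ Real.logb 2 α := by
          rw [hL, rpow_logb_comm hα0 (lt_of_lt_of_le one_pos hqp1)]
  calc N q ≤ N (2 ^ n * p) := hmono
    _ ≤ α ^ n * N p := key n
    _ ≤ (α * (q / p) ^ Real.logb 2 α) * N p :=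
        mul_le_mul_of_nonneg_right hαn (hNnonneg p)
end

section
/- Let X be a symmetric random variable with P(|X| ≥ t) = exp(−t^r) for t ≥ 0, where 0 < r < 2. Then for every p ≥ 2, ‖X‖_{2p} ≤ 2^{1/r}·‖X‖_p. -/
open MeasureTheory ProbabilityTheory

open Set Real in
private lemma aux_integrable {r q : ℝ} (hr : 0 < r) (hq : 0 < q) :
    IntegrableOn (fun t : ℝ => t ^ (q - 1) * Real.exp (-t ^ r)) (Set.Ioi 0) := by
  have hG : IntegrableOn (fun s : ℝ => s ^ (q / r - 1) * Real.exp (-s)) (Set.Ioi 0) :=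
    (Real.GammaIntegral_convergent (div_pos hq hr)).congr_fun
      (fun x _ => mul_comm _ _) measurableSet_Ioi
  have h := (MeasureTheory.integrableOn_Ioi_comp_rpow_iff'
      (fun s : ℝ => s ^ (q / r - 1) * Real.exp (-s)) hr.ne').mpr hG
  refine h.congr_fun (fun x hx => ?_) measurableSet_Ioi
  have hx0 : (0:ℝ) < x := hx
  have hexp : r * (q / r - 1) = q - r := by field_simp
  beta_reduce
  rw [smul_eq_mul, ← Real.rpow_mul hx0.le, hexp, ← mul_assoc, ← Real.rpow_add hx0]
  ring_nf

open Set Real in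
private lemma aux_value {r q : ℝ} (hr : 0 < r) (hq : 0 < q) :
    q * ∫ t in Set.Ioi (0:ℝ), t ^ (q - 1) * Real.exp (-t ^ r)
      = Real.Gamma (q / r + 1) := by
  have h := integral_rpow_mul_exp_neg_rpow hr (show (-1:ℝ) < q - 1 by linarith)
  rw [show q - 1 + 1 = q by ring] at h
  rw [h, Real.Gamma_add_one (ne_of_gt (div_pos hq hr))]
  field_simp

open Set Real in
private lemma aux_moment {Ω : Type*} [MeasureSpace Ω] [IsProbabilityMeasure (ℙ : Measure Ω)]
    (X : Ω → ℝ) (hX : Measurable X) {r : ℝ} (hr : 0 < r)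
    (htail : ∀ t : ℝ, 0 ≤ t → ℙ {ω | t ≤ |X ω|} = ENNReal.ofReal (Real.exp (-t ^ r)))
    {q : ℝ} (hq : 0 < q) :
    ∫ ω, |X ω| ^ q = Real.Gamma (q / r + 1) := by
  have f_nn : 0 ≤ᵐ[(ℙ : Measure Ω)] fun ω => |X ω| :=
    Filter.Eventually.of_forall fun ω => abs_nonneg _
  have f_mble : AEMeasurable (fun ω => |X ω|) ℙ := hX.abs.aemeasurable
  have key := lintegral_rpow_eq_lintegral_meas_le_mul (ℙ : Measure Ω) f_nn f_mble hq
  have hint : IntegrableOn (fun t : ℝ => Real.exp (-t ^ r) * t ^ (q - 1)) (Set.Ioi 0) :=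
    (aux_integrable hr hq).congr_fun (fun x _ => mul_comm _ _) measurableSet_Ioi
  have hrw : ∫⁻ t in Set.Ioi (0:ℝ), (ℙ : Measure Ω) {a | t ≤ |X a|}
        * ENNReal.ofReal (t ^ (q - 1))
      = ∫⁻ t in Set.Ioi (0:ℝ), ENNReal.ofReal (Real.exp (-t ^ r) * t ^ (q - 1)) := by
    refine setLIntegral_congr_fun measurableSet_Ioi
      (fun t ht => ?_)
    rw [htail t (le_of_lt ht), ENNReal.ofReal_mul (Real.exp_nonneg _)]
  have hofReal : ENNReal.ofReal (∫ t in Set.Ioi (0:ℝ), Real.exp (-t ^ r) * t ^ (q - 1))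
      = ∫⁻ t in Set.Ioi (0:ℝ), ENNReal.ofReal (Real.exp (-t ^ r) * t ^ (q - 1)) := by
    refine ofReal_integral_eq_lintegral_ofReal hint ?_
    filter_upwards [self_mem_ae_restrict (measurableSet_Ioi : MeasurableSet (Set.Ioi (0:ℝ)))]
      with t ht
    exact mul_nonneg (Real.exp_nonneg _) (Real.rpow_nonneg (le_of_lt ht) _)
  have hI : ∫ t in Set.Ioi (0:ℝ), Real.exp (-t ^ r) * t ^ (q - 1)
      = ∫ t in Set.Ioi (0:ℝ), t ^ (q - 1) * Real.exp (-t ^ r) :=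
    setIntegral_congr_fun measurableSet_Ioi fun x _ => mul_comm _ _
  have hInn : 0 ≤ ∫ t in Set.Ioi (0:ℝ), Real.exp (-t ^ r) * t ^ (q - 1) := by
    refine setIntegral_nonneg measurableSet_Ioi fun t ht => ?_
    exact mul_nonneg (Real.exp_nonneg _) (Real.rpow_nonneg (le_of_lt ht) _)
  have hmeas : AEStronglyMeasurable (fun ω => |X ω| ^ q) (ℙ : Measure Ω) :=
    ((Real.continuous_rpow_const hq.le).measurable.comp hX.abs).aestronglyMeasurable
  rw [integral_eq_lintegral_of_nonneg_ae
      (Filter.Eventually.of_forall fun ω => Real.rpow_nonneg (abs_nonneg _) _) hmeas]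
  rw [key, hrw, ← hofReal, ← ENNReal.ofReal_mul hq.le, ENNReal.toReal_ofReal
      (mul_nonneg hq.le hInn), hI, aux_value hr hq]

private lemma aux_two_rpow_two : (4:ℝ) = (2:ℝ) ^ (2:ℝ) := by
  have h := Real.rpow_natCast (2:ℝ) 2
  norm_num at h
  norm_num [h]

private lemma aux_gamma_ineq {x : ℝ} (hx : 1 ≤ x) :
    Real.Gamma (2 * x + 1) ≤ (4:ℝ) ^ x * Real.Gamma (x + 1) ^ 2 := by
  have hx0 : (0:ℝ) < x := lt_of_lt_of_le one_pos hx
  have hGx : 0 < Real.Gamma x := Real.Gamma_pos_of_pos hx0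
  have hGx1 : 0 < Real.Gamma (x + 1) := Real.Gamma_pos_of_pos (by linarith)
  have hGxh : 0 < Real.Gamma (x + 1/2) := Real.Gamma_pos_of_pos (by linarith)
  have hG2x : 0 < Real.Gamma (2 * x) := Real.Gamma_pos_of_pos (by linarith)
  have hadd1 : Real.Gamma (x + 1) = x * Real.Gamma x := Real.Gamma_add_one hx0.ne'
  have hmono : Real.Gamma x ≤ Real.Gamma (x + 1) := by
    rw [hadd1]; nlinarith
  have hhalf : Real.Gamma (x + 1/2) ≤ Real.Gamma (x + 1) := by
    have hconv := Real.convexOn_log_Gamma.2 (Set.mem_Ioi.mpr hx0)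
      (Set.mem_Ioi.mpr (show (0:ℝ) < x + 1 by linarith))
      (by norm_num : (0:ℝ) ≤ 1/2) (by norm_num : (0:ℝ) ≤ 1/2) (by norm_num)
    have harg : (1/2 : ℝ) • x + (1/2 : ℝ) • (x + 1) = x + 1/2 := by
      simp only [smul_eq_mul]; ring
    rw [harg] at hconv
    simp only [Function.comp_apply, smul_eq_mul] at hconv
    have hlog : Real.log (Real.Gamma (x + 1/2)) ≤ Real.log (Real.Gamma (x + 1)) := by
      have hll : Real.log (Real.Gamma x) ≤ Real.log (Real.Gamma (x + 1)) :=
        Real.log_le_log hGx hmono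
      linarith
    exact (Real.log_le_log_iff hGxh hGx1).mp hlog
  have dup := Real.Gamma_mul_Gamma_add_half x
  have hadd2 : Real.Gamma (2 * x + 1) = (2 * x) * Real.Gamma (2 * x) :=
    Real.Gamma_add_one (by positivity)
  have hc : (0:ℝ) < (2:ℝ) ^ (1 - 2*x) * Real.sqrt Real.pi :=
    mul_pos (Real.rpow_pos_of_pos two_pos _) (Real.sqrt_pos.mpr Real.pi_pos)
  rw [← mul_le_mul_iff_of_pos_right hc]
  have hL : Real.Gamma (2 * x + 1) * ((2:ℝ) ^ (1 - 2*x) * Real.sqrt Real.pi)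
      = 2 * Real.Gamma (x + 1) * Real.Gamma (x + 1/2) := by
    rw [hadd2, hadd1]
    nlinarith [dup]
  have h4 : (4:ℝ) ^ x * (2:ℝ) ^ (1 - 2*x) = 2 := by
    have h42 : (4:ℝ) ^ x = (2:ℝ) ^ (2 * x) := by
      rw [aux_two_rpow_two, ← Real.rpow_mul (by norm_num : (0:ℝ) ≤ 2)]
    rw [h42, ← Real.rpow_add two_pos]
    norm_num
  have hR : (4:ℝ) ^ x * Real.Gamma (x + 1) ^ 2 * ((2:ℝ) ^ (1 - 2*x) * Real.sqrt Real.pi)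
      = 2 * Real.Gamma (x + 1) ^ 2 * Real.sqrt Real.pi := by
    linear_combination (Real.Gamma (x + 1) ^ 2 * Real.sqrt Real.pi) * h4
  rw [hL, hR]
  have hsqrtpi : (1:ℝ) ≤ Real.sqrt Real.pi := by
    rw [show (1:ℝ) = Real.sqrt 1 by simp]
    exact Real.sqrt_le_sqrt (by linarith [Real.pi_gt_three])
  nlinarith

/-- If `X` is symmetric with `P(|X| ≥ t) = exp(-t^r)`, `0 < r < 2`, then
`‖X‖_{2p} ≤ 2^{1/r} ‖X‖_p` for every `p ≥ 2`. -/
theorem stmt3 {Ω : Type*} [MeasureSpace Ω] [IsProbabilityMeasure (ℙ : Measure Ω)]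
    (X : Ω → ℝ) (hX : Measurable X)
    (hsymm : IdentDistrib X (fun ω => -X ω))
    (r : ℝ) (hr0 : 0 < r) (hr2 : r < 2)
    (htail : ∀ t : ℝ, 0 ≤ t → ℙ {ω | t ≤ |X ω|} = ENNReal.ofReal (Real.exp (-t ^ r))) :
    ∀ p : ℝ, 2 ≤ p →
      (∫ ω, |X ω| ^ (2 * p)) ^ (1 / (2 * p))
        ≤ (2 : ℝ) ^ (1 / r) * (∫ ω, |X ω| ^ p) ^ (1 / p) := by
  intro p hp
  have hp0 : 0 < p := by linarith
  have hx : 1 ≤ p / r := (one_le_div hr0).mpr (by linarith)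
  have M1 : ∫ ω, |X ω| ^ p = Real.Gamma (p / r + 1) :=
    aux_moment X hX hr0 htail hp0
  have M2 : ∫ ω, |X ω| ^ (2 * p) = Real.Gamma (2 * (p / r) + 1) := by
    rw [aux_moment X hX hr0 htail (by linarith : (0:ℝ) < 2 * p)]
    congr 2
    ring
  rw [M1, M2]
  have hGx1 : 0 < Real.Gamma (p / r + 1) := Real.Gamma_pos_of_pos (by positivity)
  have hG2x1 : 0 ≤ Real.Gamma (2 * (p / r) + 1) :=
    (Real.Gamma_pos_of_pos (by positivity)).le
  calc Real.Gamma (2 * (p / r) + 1) ^ (1 / (2 * p))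
      ≤ ((4:ℝ) ^ (p / r) * Real.Gamma (p / r + 1) ^ 2) ^ (1 / (2 * p)) :=
        Real.rpow_le_rpow hG2x1 (aux_gamma_ineq hx) (by positivity)
    _ = (2 : ℝ) ^ (1 / r) * Real.Gamma (p / r + 1) ^ (1 / p) := by
        rw [Real.mul_rpow (by positivity) (by positivity)]
        congr 1
        · rw [← Real.rpow_mul (by norm_num : (0:ℝ) ≤ 4),
            show p / r * (1 / (2 * p)) = 1 / (2 * r) by field_simp,
            aux_two_rpow_two, ← Real.rpow_mul (by norm_num : (0:ℝ) ≤ 2)]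
          congr 1
          field_simp
        · rw [← Real.rpow_natCast (Real.Gamma (p / r + 1)) 2,
            ← Real.rpow_mul hGx1.le]
          congr 1
          push_cast
          field_simp
end

section
/- Let X₁,…,Xₙ be i.i.d. real random variables, p ≥ 2, A = n^{1/p}·‖X₁‖_p, and assume A ≤ ‖X₁‖_{2p}. Then E max_{i≤n} |X_i|^{2p} ≥ (n/3)·(‖X₁‖_{2p} − A)^{2p}. -/
open MeasureTheory ProbabilityTheory



lemma aux_integral_prod {Ω : Type*} [MeasureSpace Ω] [IsProbabilityMeasure (ℙ : Measure Ω)]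
    {n : ℕ} {f : Fin n → Ω → ℝ}
    (hindep : iIndepFun f) (hmeas : ∀ i, Measurable (f i))
    (hnn : ∀ i ω, 0 ≤ f i ω) (s : Finset (Fin n)) :
    ∫ ω, ∏ j ∈ s, f j ω = ∏ j ∈ s, ∫ ω, f j ω := by
  classical
  induction s using Finset.induction_on with
  | empty => simp
  | @insert a s ha ih =>
    have hprodmeas : Measurable (fun ω => ∏ j ∈ s, f j ω) :=
      Finset.measurable_prod s (fun j _ => hmeas j)
    have hindepprod : IndepFun (f a) (fun ω => ∏ j ∈ s, f j ω) ℙ := by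
      have h := (hindep.indepFun_finsetProd_of_notMem hmeas ha).symm
      have heq : (∏ j ∈ s, f j) = fun ω => ∏ j ∈ s, f j ω := by
        funext ω; simp [Finset.prod_apply]
      rwa [heq] at h
    have hmul := hindepprod.integral_mul_eq_mul_integral
      (hmeas a).aestronglyMeasurable hprodmeas.aestronglyMeasurable
    have heq2 : (fun ω => ∏ j ∈ insert a s, f j ω)
        = (f a * fun ω => ∏ j ∈ s, f j ω) := by
      funext ω; simp [Finset.prod_insert ha]
    rw [heq2, Finset.prod_insert ha, ← ih]
    exact hmul

lemma aux_third (n : ℕ) (hn : 0 < n) : (1:ℝ)/3 ≤ (1 - 1/(n:ℝ)) ^ (n - 1) := by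
  rcases n with _ | m
  · omega
  rcases m with _ | k
  · norm_num
  set m : ℕ := k + 1 with hm_def
  have hm : (0:ℝ) < m := by positivity
  have hsucc : ((m+1 : ℕ) : ℝ) = (m : ℝ) + 1 := by push_cast; ring
  have h1 : (1 : ℝ) - 1/((m+1 : ℕ):ℝ) = (m : ℝ) / ((m:ℝ)+1) := by
    rw [hsucc]; field_simp; ring
  have hkey : ((1:ℝ) + 1/(m:ℝ)) ^ m ≤ 3 := by
    have h2 : (1:ℝ) + 1/(m:ℝ) ≤ Real.exp (1/(m:ℝ)) := by
      have := Real.add_one_le_exp (1/(m:ℝ)); linarith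
    have h3 : ((1:ℝ) + 1/(m:ℝ)) ^ m ≤ Real.exp (1/(m:ℝ)) ^ m :=
      pow_le_pow_left₀ (by positivity) h2 m
    have h4 : Real.exp (1/(m:ℝ)) ^ m = Real.exp 1 := by
      rw [← Real.exp_nat_mul]; congr 1; field_simp
    have h5 : Real.exp 1 ≤ 3 := le_of_lt (lt_trans Real.exp_one_lt_d9 (by norm_num))
    calc ((1:ℝ) + 1/(m:ℝ)) ^ m ≤ Real.exp (1/(m:ℝ)) ^ m := h3
      _ = Real.exp 1 := h4
      _ ≤ 3 := h5
  have hmulone : ((m:ℝ)/((m:ℝ)+1)) ^ m * ((1:ℝ) + 1/(m:ℝ)) ^ m = 1 := by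
    rw [← mul_pow]
    have h : (m:ℝ)/((m:ℝ)+1) * ((1:ℝ) + 1/(m:ℝ)) = 1 := by field_simp
    rw [h, one_pow]
  have hxpos : (0:ℝ) < ((1:ℝ) + 1/(m:ℝ)) ^ m := by positivity
  have heqinv : ((m:ℝ)/((m:ℝ)+1)) ^ m = (((1:ℝ) + 1/(m:ℝ)) ^ m)⁻¹ :=
    eq_inv_of_mul_eq_one_left hmulone
  have hn1 : (m + 1 : ℕ) - 1 = m := by omega
  rw [h1, hn1, heqinv, show (1:ℝ)/3 = 3⁻¹ by norm_num]
  exact inv_anti₀ hxpos hkey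


lemma aux_minkowski {Ω : Type*} [MeasureSpace Ω] [IsProbabilityMeasure (ℙ : Measure Ω)]
    (Z : Ω → ℝ) (hZ : Measurable Z) (A r : ℝ) (hA : 0 ≤ A) (hr : 1 ≤ r)
    (hint : Integrable (fun ω => |Z ω| ^ r))
    (hintf : Integrable (fun ω => (max (|Z ω| - A) 0) ^ r)) :
    (∫ ω, |Z ω| ^ r) ^ (1/r) ≤ (∫ ω, (max (|Z ω| - A) 0) ^ r) ^ (1/r) + A := by
  have hr0 : (0:ℝ) < r := lt_of_lt_of_le one_pos hr
  set f : Ω → ℝ := fun ω => max (|Z ω| - A) 0 with hf_def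
  have hf_nn : ∀ ω, 0 ≤ f ω := fun ω => le_max_right _ _
  have hf_meas : Measurable f := (hZ.abs.sub_const A).max measurable_const
  set Fl : Ω → ENNReal := fun ω => ENNReal.ofReal (|Z ω|) with hFl_def
  set Gl : Ω → ENNReal := fun ω => ENNReal.ofReal (f ω) with hGl_def
  set c : ENNReal := ENNReal.ofReal A with hc_def
  set K : Ω → ENNReal := fun _ => c with hK_def
  have hGl_meas : AEMeasurable Gl ℙ := (ENNReal.measurable_ofReal.comp hf_meas).aemeasurable
  have h_ptle : ∀ ω, Fl ω ≤ Gl ω + c := by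
    intro ω
    have h1 : |Z ω| ≤ f ω + A := by
      have := le_max_left (|Z ω| - A) 0; simp only [hf_def]; linarith
    calc Fl ω ≤ ENNReal.ofReal (f ω + A) := ENNReal.ofReal_le_ofReal h1
      _ = Gl ω + c := ENNReal.ofReal_add (hf_nn ω) hA
  have hmink := ENNReal.lintegral_Lp_add_le hGl_meas aemeasurable_const hr
    (μ := (ℙ : Measure Ω)) (f := Gl) (g := K)
  have hmono : (∫⁻ ω, (Fl ω) ^ r ∂ℙ) ^ (1/r)
      ≤ (∫⁻ a, ((Gl + K) a) ^ r ∂ℙ) ^ (1/r) := by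
    apply ENNReal.rpow_le_rpow _ (by positivity)
    apply lintegral_mono
    intro ω
    exact ENNReal.rpow_le_rpow (h_ptle ω) hr0.le
  have hInn : 0 ≤ ∫ ω, |Z ω| ^ r :=
    integral_nonneg fun ω => Real.rpow_nonneg (abs_nonneg _) r
  have hfnn : 0 ≤ ∫ ω, f ω ^ r := integral_nonneg fun ω => Real.rpow_nonneg (hf_nn ω) r
  have hL : ∫⁻ ω, (Fl ω) ^ r ∂ℙ = ENNReal.ofReal (∫ ω, |Z ω| ^ r) := by
    simp_rw [hFl_def, ENNReal.ofReal_rpow_of_nonneg (abs_nonneg _) hr0.le]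
    exact (ofReal_integral_eq_lintegral_ofReal hint
      (Filter.Eventually.of_forall fun ω => Real.rpow_nonneg (abs_nonneg _) r)).symm
  have hG : ∫⁻ ω, (Gl ω) ^ r ∂ℙ = ENNReal.ofReal (∫ ω, f ω ^ r) := by
    simp_rw [hGl_def, fun ω => ENNReal.ofReal_rpow_of_nonneg (hf_nn ω) hr0.le]
    exact (ofReal_integral_eq_lintegral_ofReal hintf
      (Filter.Eventually.of_forall fun ω => Real.rpow_nonneg (hf_nn ω) r)).symm
  have hcL : (∫⁻ a, (K a) ^ r ∂ℙ) ^ (1/r) = c := by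
    rw [hK_def]
    rw [lintegral_const, measure_univ, mul_one, ← ENNReal.rpow_mul,
      mul_one_div_cancel hr0.ne', ENNReal.rpow_one]
  have hchain : ENNReal.ofReal ((∫ ω, |Z ω| ^ r) ^ (1/r))
      ≤ ENNReal.ofReal ((∫ ω, f ω ^ r) ^ (1/r) + A) := by
    rw [← ENNReal.ofReal_rpow_of_nonneg hInn (by positivity : (0:ℝ) ≤ 1/r)]
    calc (ENNReal.ofReal (∫ ω, |Z ω| ^ r)) ^ (1/r)
        = (∫⁻ ω, (Fl ω) ^ r ∂ℙ) ^ (1/r) := by rw [hL]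
      _ ≤ (∫⁻ a, ((Gl + K) a) ^ r ∂ℙ) ^ (1/r) := hmono
      _ ≤ (∫⁻ ω, (Gl ω) ^ r ∂ℙ) ^ (1/r)
            + (∫⁻ a, (K a) ^ r ∂ℙ) ^ (1/r) := hmink
      _ = (ENNReal.ofReal (∫ ω, f ω ^ r)) ^ (1/r) + c := by rw [hG, hcL]
      _ = ENNReal.ofReal ((∫ ω, f ω ^ r) ^ (1/r)) + ENNReal.ofReal A := by
          rw [ENNReal.ofReal_rpow_of_nonneg hfnn (by positivity : (0:ℝ) ≤ 1/r)]
      _ = ENNReal.ofReal ((∫ ω, f ω ^ r) ^ (1/r) + A) := by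
          rw [ENNReal.ofReal_add (Real.rpow_nonneg hfnn _) hA]
  have := (ENNReal.ofReal_le_ofReal_iff (by positivity)).mp hchain
  exact this


/-- For i.i.d. `X₁,…,Xₙ`, `p ≥ 2`, `A = n^{1/p}‖X₁‖_p ≤ ‖X₁‖_{2p}`, one has
`E max_i |X_i|^{2p} ≥ (n/3)(‖X₁‖_{2p} - A)^{2p}`. -/
theorem stmt5 {Ω : Type*} [MeasureSpace Ω] [IsProbabilityMeasure (ℙ : Measure Ω)]
    (n : ℕ) (hn : 0 < n) (X : Fin n → Ω → ℝ) (hX : ∀ i, Measurable (X i))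
    (hindep : iIndepFun X)
    (hid : ∀ i, IdentDistrib (X i) (X ⟨0, hn⟩))
    (p : ℝ) (hp : 2 ≤ p)
    (hintp : Integrable (fun ω => |X ⟨0, hn⟩ ω| ^ p))
    (hint2p : Integrable (fun ω => |X ⟨0, hn⟩ ω| ^ (2 * p)))
    (hA : (n : ℝ) ^ (1 / p) * (∫ ω, |X ⟨0, hn⟩ ω| ^ p) ^ (1 / p)
        ≤ (∫ ω, |X ⟨0, hn⟩ ω| ^ (2 * p)) ^ (1 / (2 * p))) :
    (n : ℝ) / 3 *
        ((∫ ω, |X ⟨0, hn⟩ ω| ^ (2 * p)) ^ (1 / (2 * p))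
          - (n : ℝ) ^ (1 / p) * (∫ ω, |X ⟨0, hn⟩ ω| ^ p) ^ (1 / p)) ^ (2 * p)
      ≤ ∫ ω, (⨆ i, |X i ω|) ^ (2 * p) := by
  classical
  set i0 : Fin n := ⟨0, hn⟩ with hi0_def
  have hp0 : (0:ℝ) < p := by linarith
  have h2p0 : (0:ℝ) < 2 * p := by linarith
  have h2p1 : (1:ℝ) ≤ 2 * p := by linarith
  have hEp_nn : 0 ≤ ∫ ω, |X i0 ω| ^ p :=
    integral_nonneg fun ω => Real.rpow_nonneg (abs_nonneg _) _
  have hE2p_nn : 0 ≤ ∫ ω, |X i0 ω| ^ (2 * p) :=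
    integral_nonneg fun ω => Real.rpow_nonneg (abs_nonneg _) _
  set A : ℝ := (n : ℝ) ^ (1 / p) * (∫ ω, |X i0 ω| ^ p) ^ (1 / p) with hA_def
  set M : ℝ := (∫ ω, |X i0 ω| ^ (2 * p)) ^ (1 / (2 * p)) with hM_def
  have hA_nn : 0 ≤ A :=
    mul_nonneg (Real.rpow_nonneg (Nat.cast_nonneg n) _) (Real.rpow_nonneg hEp_nn _)
  have hMA_nn : 0 ≤ M - A := sub_nonneg.mpr hA
  -- indicator and truncation functions
  set S : Set ℝ := {x | |x| ≤ A} with hS_def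
  have hS : MeasurableSet S := measurableSet_le measurable_abs measurable_const
  set χ : ℝ → ℝ := S.indicator (fun _ => (1:ℝ)) with hχ_def
  have hχ_meas : Measurable χ := measurable_const.indicator hS
  have hχ_nn : ∀ x, 0 ≤ χ x := fun x => Set.indicator_nonneg (fun _ _ => zero_le_one) x
  have hχ_le1 : ∀ x, χ x ≤ 1 := by
    intro x
    by_cases h : x ∈ S
    · simp [hχ_def, Set.indicator_of_mem h]
    · simp [hχ_def, Set.indicator_of_notMem h]
  have hχ_zero : ∀ x, A < |x| → χ x = 0 := by
    intro x hx
    apply Set.indicator_of_notMem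
    simp only [hS_def, Set.mem_setOf_eq, not_le]
    exact hx
  set g : ℝ → ℝ := fun x => (max (|x| - A) 0) ^ (2*p) with hg_def
  have hg_meas : Measurable g := by
    rw [hg_def]; fun_prop
  have hg_nn : ∀ x, 0 ≤ g x := fun x => Real.rpow_nonneg (le_max_right _ _) _
  have hg_le : ∀ x, g x ≤ |x| ^ (2*p) := by
    intro x
    apply Real.rpow_le_rpow (le_max_right _ _) _ h2p0.le
    exact max_le (by linarith [abs_nonneg x]) (abs_nonneg x)
  have hg_zero : ∀ x, |x| ≤ A → g x = 0 := by
    intro x hx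
    rw [hg_def]
    simp only
    rw [max_eq_right (by linarith), Real.zero_rpow h2p0.ne']
  -- integrability of |X i|^{2p}
  have habs2p_int : ∀ i, Integrable (fun ω => |X i ω| ^ (2*p)) := by
    intro i
    have hcm : Measurable (fun x : ℝ => |x| ^ (2*p)) := by fun_prop
    exact ((hid i).comp hcm).integrable_iff.mpr hint2p
  have hgX_int : ∀ i, Integrable (fun ω => g (X i ω)) := by
    intro i
    refine (habs2p_int i).mono' ((hg_meas.comp (hX i)).aestronglyMeasurable) ?_
    refine Filter.Eventually.of_forall fun ω => ?_
    rw [Real.norm_eq_abs, abs_of_nonneg (hg_nn _)]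
    exact hg_le _
  have hχX_int : ∀ i, Integrable (fun ω => χ (X i ω)) := by
    intro i
    refine (integrable_const (1:ℝ)).mono' ((hχ_meas.comp (hX i)).aestronglyMeasurable) ?_
    refine Filter.Eventually.of_forall fun ω => ?_
    rw [Real.norm_eq_abs, abs_of_nonneg (hχ_nn _)]
    exact hχ_le1 _
  -- q
  set q : ℝ := ∫ ω, χ (X i0 ω) with hq_def
  have hq_eq : ∀ i, ∫ ω, χ (X i ω) = q := fun i => ((hid i).comp hχ_meas).integral_eq
  have hq_nn : 0 ≤ q := integral_nonneg fun ω => hχ_nn _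
  have hq_le1 : q ≤ 1 := by
    have h := integral_mono (hχX_int i0) (integrable_const 1) (fun ω => hχ_le1 _)
    simpa using h
  -- Markov: q ≥ 1 - 1/n
  have hpre : MeasurableSet (X i0 ⁻¹' S) := (hX i0) hS
  have hcompl : (ℙ ((X i0 ⁻¹' S)ᶜ)).toReal ≤ 1/(n:ℝ) := by
    by_cases hEp0 : (∫ ω, |X i0 ω| ^ p) = 0
    · have hzero := (integral_eq_zero_iff_of_nonneg
        (fun ω => Real.rpow_nonneg (abs_nonneg _) _) hintp).mp hEp0
      have hsub : (X i0 ⁻¹' S)ᶜ ⊆ {ω | ¬ (|X i0 ω| ^ p = 0)} := by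
        intro ω hω
        simp only [Set.mem_compl_iff, Set.mem_preimage, hS_def, Set.mem_setOf_eq, not_le] at hω
        have hpos : 0 < |X i0 ω| := lt_of_le_of_lt hA_nn hω
        simp only [Set.mem_setOf_eq]
        exact (Real.rpow_pos_of_pos hpos p).ne'
      have hnullset : ℙ {ω | ¬ (|X i0 ω| ^ p = 0)} = 0 := by
        have h2 : ∀ᵐ ω ∂(ℙ : Measure Ω), |X i0 ω| ^ p = 0 := hzero
        exact (ae_iff.mp h2)
      have hnull : ℙ ((X i0 ⁻¹' S)ᶜ) = 0 := measure_mono_null hsub hnullset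
      rw [hnull]
      simp only [ENNReal.toReal_zero]
      positivity
    · have hEp_pos : 0 < ∫ ω, |X i0 ω| ^ p := lt_of_le_of_ne hEp_nn (Ne.symm hEp0)
      have hn_pos : (0:ℝ) < n := by exact_mod_cast hn
      have hA_pos : 0 < A :=
        mul_pos (Real.rpow_pos_of_pos hn_pos _) (Real.rpow_pos_of_pos hEp_pos _)
      have hApow : A ^ p = (n:ℝ) * ∫ ω, |X i0 ω| ^ p := by
        rw [hA_def, Real.mul_rpow (Real.rpow_nonneg (Nat.cast_nonneg n) _)
          (Real.rpow_nonneg hEp_nn _), ← Real.rpow_mul (Nat.cast_nonneg n),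
          ← Real.rpow_mul hEp_nn, one_div_mul_cancel hp0.ne', Real.rpow_one, Real.rpow_one]
      have hmar := mul_meas_ge_le_integral_of_nonneg (μ := (ℙ : Measure Ω))
        (f := fun ω => |X i0 ω| ^ p)
        (Filter.Eventually.of_forall fun ω => Real.rpow_nonneg (abs_nonneg _) _) hintp (A ^ p)
      have hsub : (X i0 ⁻¹' S)ᶜ ⊆ {ω | A ^ p ≤ |X i0 ω| ^ p} := by
        intro ω hω
        simp only [Set.mem_compl_iff, Set.mem_preimage, hS_def, Set.mem_setOf_eq, not_le] at hω
        exact Real.rpow_le_rpow hA_nn hω.le hp0.le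
      have hle : (ℙ ((X i0 ⁻¹' S)ᶜ)).toReal ≤ (ℙ {ω | A ^ p ≤ |X i0 ω| ^ p}).toReal :=
        ENNReal.toReal_mono (measure_ne_top _ _) (measure_mono hsub)
      have hAp_pos : 0 < A ^ p := Real.rpow_pos_of_pos hA_pos p
      have h2 : (ℙ {ω | A ^ p ≤ |X i0 ω| ^ p}).toReal ≤ (∫ ω, |X i0 ω| ^ p) / A ^ p := by
        rw [le_div_iff₀ hAp_pos]
        calc (ℙ {ω | A ^ p ≤ |X i0 ω| ^ p}).toReal * A ^ p
            = A ^ p * (ℙ {ω | A ^ p ≤ |X i0 ω| ^ p}).toReal := by ring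
          _ ≤ _ := hmar
      have h3 : (∫ ω, |X i0 ω| ^ p) / A ^ p = 1/(n:ℝ) := by
        rw [hApow]
        field_simp
      linarith
  have hq_ge : 1 - 1/(n:ℝ) ≤ q := by
    have hq_meas_eq : q = (ℙ (X i0 ⁻¹' S)).toReal := by
      rw [hq_def]
      have heq : (fun ω => χ (X i0 ω)) = (X i0 ⁻¹' S).indicator (fun _ => (1:ℝ)) := by
        funext ω
        by_cases h : X i0 ω ∈ S
        · simp [hχ_def, Set.indicator_of_mem, h, Set.mem_preimage]
        · simp [hχ_def, Set.indicator_of_notMem, h, Set.mem_preimage]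
      rw [heq]
      exact integral_indicator_one hpre
    have hsum := prob_add_prob_compl (μ := (ℙ : Measure Ω)) hpre
    have h1 : (ℙ (X i0 ⁻¹' S)).toReal + (ℙ ((X i0 ⁻¹' S)ᶜ)).toReal = 1 := by
      rw [← ENNReal.toReal_add (measure_ne_top _ _) (measure_ne_top _ _), hsum]
      simp
    rw [hq_meas_eq]
    linarith
  -- IY
  set IY : ℝ := ∫ ω, g (X i0 ω) with hIY_def
  have hIY_nn : 0 ≤ IY := integral_nonneg fun ω => hg_nn _
  -- independence: per-term integral
  have hterm_eq : ∀ i : Fin n, ∫ ω, g (X i ω) * ∏ j ∈ Finset.Iio i, χ (X j ω)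
      = IY * q ^ (Finset.Iio i).card := by
    intro i
    set G : Fin n → ℝ → ℝ := fun j => if j = i then g else χ with hG_def
    have hGmeas : ∀ j, Measurable (G j) := by
      intro j
      rw [hG_def]
      dsimp only
      split_ifs
      exacts [hg_meas, hχ_meas]
    have hGnn : ∀ j x, 0 ≤ G j x := by
      intro j x
      rw [hG_def]
      dsimp only
      split_ifs
      exacts [hg_nn x, hχ_nn x]
    have hFindep : iIndepFun (fun j => G j ∘ X j) ℙ :=
      hindep.comp G hGmeas
    have hFmeas : ∀ j, Measurable (G j ∘ X j) := fun j => (hGmeas j).comp (hX j)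
    have hni : i ∉ Finset.Iio i := by simp
    have hFprod := (hFindep.indepFun_finsetProd_of_notMem hFmeas hni).symm
    have hGi : G i ∘ X i = fun ω => g (X i ω) := by
      funext ω; simp [hG_def, Function.comp]
    have hprodfun : (∏ j ∈ Finset.Iio i, (G j ∘ X j)) = fun ω => ∏ j ∈ Finset.Iio i, χ (X j ω) := by
      funext ω
      rw [Finset.prod_apply]
      refine Finset.prod_congr rfl fun j hj => ?_
      have hne : j ≠ i := ne_of_lt (Finset.mem_Iio.mp hj)
      simp [hG_def, Function.comp, hne]
    have hFprod' : IndepFun (fun ω => g (X i ω)) (fun ω => ∏ j ∈ Finset.Iio i, χ (X j ω)) ℙ := by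
      rw [hGi, hprodfun] at hFprod
      exact hFprod
    have hmul := hFprod'.integral_mul_eq_mul_integral
      ((hg_meas.comp (hX i)).aestronglyMeasurable)
      ((Finset.measurable_prod (Finset.Iio i) (fun j _ => hχ_meas.comp (hX j))).aestronglyMeasurable)
    have hLHS : (fun ω => g (X i ω) * ∏ j ∈ Finset.Iio i, χ (X j ω))
        = ((fun ω => g (X i ω)) * (fun ω => ∏ j ∈ Finset.Iio i, χ (X j ω))) := rfl
    rw [hLHS]
    rw [hmul]
    -- first factor
    have hfst : ∫ ω, g (X i ω) = IY := ((hid i).comp hg_meas).integral_eq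
    -- second factor
    have hχfam : iIndepFun (fun j => χ ∘ X j) ℙ :=
      hindep.comp (fun _ => χ) (fun _ => hχ_meas)
    have hsnd : ∫ ω, ∏ j ∈ Finset.Iio i, χ (X j ω) = q ^ (Finset.Iio i).card := by
      have haux := aux_integral_prod hχfam (fun j => hχ_meas.comp (hX j))
        (fun j ω => hχ_nn _) (Finset.Iio i)
      calc ∫ ω, ∏ j ∈ Finset.Iio i, χ (X j ω)
          = ∏ j ∈ Finset.Iio i, ∫ ω, (χ ∘ X j) ω := haux
        _ = ∏ _j ∈ Finset.Iio i, q := Finset.prod_congr rfl fun j _ => hq_eq j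
        _ = q ^ (Finset.Iio i).card := Finset.prod_const q
    rw [hfst, hsnd]
  -- q^card ≥ 1/3
  have hthird : ∀ i : Fin n, (1:ℝ)/3 ≤ q ^ (Finset.Iio i).card := by
    intro i
    have hcard : (Finset.Iio i).card ≤ n - 1 := by
      have h1 : (Finset.Iio i).card = (i : ℕ) := by simp
      have := i.isLt
      omega
    have hn1 : (1:ℝ) ≤ n := by exact_mod_cast hn
    have h0 : (0:ℝ) ≤ 1 - 1/(n:ℝ) := by
      have : 1/(n:ℝ) ≤ 1 := by
        rw [div_le_one (by linarith)]
        exact hn1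
      linarith
    calc (1:ℝ)/3 ≤ (1 - 1/(n:ℝ)) ^ (n-1) := aux_third n hn
      _ ≤ q ^ (n-1) := pow_le_pow_left₀ h0 hq_ge _
      _ ≤ q ^ (Finset.Iio i).card := pow_le_pow_of_le_one hq_nn hq_le1 hcard
  -- per-term integrability
  have hterm_int : ∀ i : Fin n,
      Integrable (fun ω => g (X i ω) * ∏ j ∈ Finset.Iio i, χ (X j ω)) := by
    intro i
    refine (hgX_int i).mono' ?_ ?_
    · exact ((hg_meas.comp (hX i)).mul
        (Finset.measurable_prod (Finset.Iio i) (fun j _ => hχ_meas.comp (hX j)))).aestronglyMeasurable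
    · refine Filter.Eventually.of_forall fun ω => ?_
      have hprod_nn : 0 ≤ ∏ j ∈ Finset.Iio i, χ (X j ω) :=
        Finset.prod_nonneg fun j _ => hχ_nn _
      have hprod_le1 : (∏ j ∈ Finset.Iio i, χ (X j ω)) ≤ 1 :=
        Finset.prod_le_one (fun j _ => hχ_nn _) (fun j _ => hχ_le1 _)
      rw [Real.norm_eq_abs, abs_of_nonneg (mul_nonneg (hg_nn _) hprod_nn)]
      calc g (X i ω) * ∏ j ∈ Finset.Iio i, χ (X j ω) ≤ g (X i ω) * 1 :=
            mul_le_mul_of_nonneg_left hprod_le1 (hg_nn _)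
        _ = g (X i ω) := mul_one _
  -- sup facts
  have hbdd : ∀ ω, BddAbove (Set.range fun i => |X i ω|) :=
    fun ω => Set.Finite.bddAbove (Set.finite_range _)
  have hsup_ge : ∀ ω (i : Fin n), |X i ω| ≤ ⨆ j, |X j ω| := fun ω i => le_ciSup (hbdd ω) i
  have hsup_nn : ∀ ω, 0 ≤ ⨆ j, |X j ω| :=
    fun ω => le_trans (abs_nonneg _) (hsup_ge ω i0)
  -- pointwise bound
  have hpt : ∀ ω, (∑ i, g (X i ω) * ∏ j ∈ Finset.Iio i, χ (X j ω))
      ≤ (⨆ i, |X i ω|) ^ (2*p) := by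
    intro ω
    by_cases hex : ∃ i, A < |X i ω|
    · set t := Finset.univ.filter (fun i : Fin n => A < |X i ω|) with ht_def
      have htne : t.Nonempty := by
        obtain ⟨i, hi⟩ := hex
        exact ⟨i, by simp [ht_def, hi]⟩
      set i₁ := t.min' htne with hi₁_def
      have hmem := t.min'_mem htne
      have h1 : A < |X i₁ ω| := (Finset.mem_filter.mp hmem).2
      have hsum_eq : (∑ i, g (X i ω) * ∏ j ∈ Finset.Iio i, χ (X j ω))
          = g (X i₁ ω) * ∏ j ∈ Finset.Iio i₁, χ (X j ω) := by
        apply Finset.sum_eq_single i₁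
        · intro b _ hb
          rcases lt_or_gt_of_ne hb with hlt | hgt
          · have hbt : b ∉ t := fun hbt => absurd (t.min'_le b hbt) (not_le.mpr hlt)
            have hble : |X b ω| ≤ A := by
              by_contra hc
              exact hbt (by simp [ht_def, not_le.mp hc])
            rw [hg_zero _ hble, zero_mul]
          · have hz : χ (X i₁ ω) = 0 := hχ_zero _ h1
            rw [Finset.prod_eq_zero (Finset.mem_Iio.mpr hgt) hz, mul_zero]
        · intro h
          exact absurd (Finset.mem_univ i₁) h
      rw [hsum_eq]
      have hprod_le1 : (∏ j ∈ Finset.Iio i₁, χ (X j ω)) ≤ 1 :=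
        Finset.prod_le_one (fun j _ => hχ_nn _) (fun j _ => hχ_le1 _)
      calc g (X i₁ ω) * ∏ j ∈ Finset.Iio i₁, χ (X j ω) ≤ g (X i₁ ω) * 1 :=
            mul_le_mul_of_nonneg_left hprod_le1 (hg_nn _)
        _ = g (X i₁ ω) := mul_one _
        _ ≤ |X i₁ ω| ^ (2*p) := hg_le _
        _ ≤ (⨆ i, |X i ω|) ^ (2*p) :=
            Real.rpow_le_rpow (abs_nonneg _) (hsup_ge ω i₁) h2p0.le
    · push_neg at hex
      have hzero : ∀ i ∈ Finset.univ, g (X i ω) * ∏ j ∈ Finset.Iio i, χ (X j ω) = 0 :=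
        fun i _ => by rw [hg_zero _ (hex i), zero_mul]
      rw [Finset.sum_eq_zero hzero]
      exact Real.rpow_nonneg (hsup_nn ω) _
  -- sup integrable
  have hsum_int : Integrable (fun ω => ∑ i, |X i ω| ^ (2*p)) :=
    integrable_finset_sum _ (fun i _ => habs2p_int i)
  have hsupf_meas : Measurable (fun ω => ⨆ i, |X i ω|) :=
    Measurable.iSup (fun i => (hX i).abs)
  have hsup_meas : Measurable (fun ω => (⨆ i, |X i ω|) ^ (2*p)) :=
    (by fun_prop : Measurable (fun y : ℝ => y ^ (2*p))).comp hsupf_meas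
  haveI : Nonempty (Fin n) := ⟨i0⟩
  have hsup_le_sum : ∀ ω, (⨆ i, |X i ω|) ^ (2*p) ≤ ∑ i, |X i ω| ^ (2*p) := by
    intro ω
    obtain ⟨i, hi⟩ := exists_eq_ciSup_of_finite (f := fun j : Fin n => |X j ω|)
    rw [← hi]
    exact Finset.single_le_sum (f := fun j : Fin n => |X j ω| ^ (2*p))
      (fun j _ => Real.rpow_nonneg (abs_nonneg _) _) (Finset.mem_univ i)
  have hsup_int : Integrable (fun ω => (⨆ i, |X i ω|) ^ (2*p)) := by
    refine hsum_int.mono' hsup_meas.aestronglyMeasurable ?_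
    refine Filter.Eventually.of_forall fun ω => ?_
    rw [Real.norm_eq_abs, abs_of_nonneg (Real.rpow_nonneg (hsup_nn ω) _)]
    exact hsup_le_sum ω
  -- step 4: (M - A)^{2p} ≤ IY
  have hstep4 : (M - A) ^ (2*p) ≤ IY := by
    have hmink := aux_minkowski (X i0) (hX i0) A (2*p) hA_nn h2p1 hint2p (hgX_int i0)
    have hMB : M - A ≤ IY ^ (1/(2*p)) := by
      have h := hmink
      rw [hM_def]
      linarith [h]
    calc (M - A) ^ (2*p) ≤ (IY ^ (1/(2*p))) ^ (2*p) :=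
          Real.rpow_le_rpow hMA_nn hMB h2p0.le
      _ = IY := by
          rw [← Real.rpow_mul hIY_nn, one_div_mul_cancel h2p0.ne', Real.rpow_one]
  -- assemble
  have hterm_lb : ∀ i ∈ Finset.univ, IY/3 ≤ ∫ ω, g (X i ω) * ∏ j ∈ Finset.Iio i, χ (X j ω) := by
    intro i _
    rw [hterm_eq i]
    calc IY/3 = IY * (1/3) := by ring
      _ ≤ IY * q ^ (Finset.Iio i).card := mul_le_mul_of_nonneg_left (hthird i) hIY_nn
  have hkey : (n:ℝ) * (IY/3) ≤ ∑ i, ∫ ω, g (X i ω) * ∏ j ∈ Finset.Iio i, χ (X j ω) := by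
    have h := Finset.card_nsmul_le_sum Finset.univ
      (fun i => ∫ ω, g (X i ω) * ∏ j ∈ Finset.Iio i, χ (X j ω)) (IY/3) hterm_lb
    simpa [nsmul_eq_mul, Finset.card_univ] using h
  have hint_sum : ∫ ω, ∑ i, g (X i ω) * ∏ j ∈ Finset.Iio i, χ (X j ω)
      = ∑ i, ∫ ω, g (X i ω) * ∏ j ∈ Finset.Iio i, χ (X j ω) :=
    integral_finset_sum _ (fun i _ => hterm_int i)
  have hfinal1 : ∫ ω, ∑ i, g (X i ω) * ∏ j ∈ Finset.Iio i, χ (X j ω)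
      ≤ ∫ ω, (⨆ i, |X i ω|) ^ (2*p) :=
    integral_mono (integrable_finset_sum _ fun i _ => hterm_int i) hsup_int hpt
  calc (n:ℝ)/3 * (M - A) ^ (2*p) ≤ (n:ℝ)/3 * IY := by
        apply mul_le_mul_of_nonneg_left hstep4
        positivity
    _ = (n:ℝ) * (IY/3) := by ring
    _ ≤ ∑ i, ∫ ω, g (X i ω) * ∏ j ∈ Finset.Iio i, χ (X j ω) := hkey
    _ = ∫ ω, ∑ i, g (X i ω) * ∏ j ∈ Finset.Iio i, χ (X j ω) := hint_sum.symm
    _ ≤ ∫ ω, (⨆ i, |X i ω|) ^ (2*p) := hfinal1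
end

section
/- Let X₁, X₂, … be i.i.d. real random variables with all moments finite such that there is L ≥ 1 with (E max_{i≤n} |X_i|^p)^{1/p} ≤ L·[E max_{i≤n} |X_i| + ‖X₁‖_p] for every p ≥ 1 and every n. Then ‖X₁‖_{2p} ≤ α(L)·‖X₁‖_p for all p ≥ 2, where one may take α(L) = (4 + 1/(2L))·(16L² + 1). -/
set_option maxHeartbeats 1000000

open MeasureTheory ProbabilityTheory

noncomputable def s7ind (t : ℝ) (x : ℝ) : ℝ := if t ≤ |x| then 1 else 0

lemma s7ind_nonneg (t x : ℝ) : 0 ≤ s7ind t x := by unfold s7ind; split <;> norm_num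

lemma s7ind_le_one (t x : ℝ) : s7ind t x ≤ 1 := by unfold s7ind; split <;> norm_num

lemma s7ind_meas (t : ℝ) : Measurable (s7ind t) :=
  Measurable.ite (measurableSet_le measurable_const measurable_abs) measurable_const
    measurable_const

lemma s7_one_sub_sum_le_prod {ι : Type*} [DecidableEq ι] (s : Finset ι) (x : ι → ℝ)
    (h0 : ∀ j ∈ s, 0 ≤ x j) (h1 : ∀ j ∈ s, x j ≤ 1) :
    1 - ∑ j ∈ s, x j ≤ ∏ j ∈ s, (1 - x j) := by
  induction s using Finset.induction_on with
  | empty => simp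
  | @insert a s ha ih =>
    have h0' : ∀ j ∈ s, 0 ≤ x j := fun j hj => h0 j (Finset.mem_insert_of_mem hj)
    have h1' : ∀ j ∈ s, x j ≤ 1 := fun j hj => h1 j (Finset.mem_insert_of_mem hj)
    have ha0 : 0 ≤ x a := h0 a (Finset.mem_insert_self a s)
    have ha1 : x a ≤ 1 := h1 a (Finset.mem_insert_self a s)
    rw [Finset.sum_insert ha, Finset.prod_insert ha]
    have hP0 : 0 ≤ ∏ j ∈ s, (1 - x j) :=
      Finset.prod_nonneg fun j hj => by linarith [h1' j hj]
    have hs0 : 0 ≤ ∑ j ∈ s, x j := Finset.sum_nonneg h0'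
    rcases le_or_gt (∑ j ∈ s, x j) 1 with hs | hs
    · have hih := ih h0' h1'
      have := mul_le_mul_of_nonneg_left hih (by linarith : (0:ℝ) ≤ 1 - x a)
      nlinarith [mul_nonneg ha0 hs0]
    · nlinarith [mul_nonneg (by linarith : (0:ℝ) ≤ 1 - x a) hP0]

lemma s7_rpow_add_le {x y z : ℝ} (hx : 0 ≤ x) (hy : 0 ≤ y) (hz0 : 0 ≤ z) (hz1 : z ≤ 1) :
    (x + y) ^ z ≤ x ^ z + y ^ z := by
  have h := NNReal.rpow_add_le_add_rpow x.toNNReal y.toNNReal hz0 hz1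
  rw [← NNReal.coe_le_coe] at h
  push_cast at h
  rwa [Real.coe_toNNReal x hx, Real.coe_toNNReal y hy] at h

lemma s7_int_le_rpow {Ω : Type*} [MeasureSpace Ω] [IsProbabilityMeasure (ℙ : Measure Ω)]
    {f : Ω → ℝ} {p : ℝ} (hp : 1 < p) (hf : Measurable f) (hnn : ∀ ω, 0 ≤ f ω)
    (hfp : Integrable (fun ω => f ω ^ p)) :
    ∫ ω, f ω ≤ (∫ ω, f ω ^ p) ^ (1 / p) := by
  have hp0 : (0:ℝ) < p := lt_trans one_pos hp
  have hconj : p.HolderConjugate p.conjExponent := Real.HolderConjugate.conjExponent hp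
  have hne0 : ENNReal.ofReal p ≠ 0 := by
    simp [ENNReal.ofReal_eq_zero, not_le, hp0]
  have hnetop : ENNReal.ofReal p ≠ ⊤ := ENNReal.ofReal_ne_top
  have hmem : MemLp f (ENNReal.ofReal p) ℙ := by
    refine (memLp_norm_rpow_iff hf.aestronglyMeasurable hne0 hnetop).mp ?_
    rw [ENNReal.div_self hne0 hnetop, ENNReal.toReal_ofReal hp0.le,
      memLp_one_iff_integrable]
    refine hfp.congr (ae_of_all _ fun ω => ?_)
    show f ω ^ p = ‖f ω‖ ^ p
    rw [Real.norm_of_nonneg (hnn ω)]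
  have hmem1 : MemLp (fun _ : Ω => (1:ℝ)) (ENNReal.ofReal p.conjExponent) ℙ := memLp_const 1
  have h := integral_mul_le_Lp_mul_Lq_of_nonneg hconj (ae_of_all _ hnn)
    (ae_of_all _ fun _ => zero_le_one) hmem hmem1
  simpa [hconj.symm.pos.ne', Real.one_rpow] using h

lemma s7_transfer {Ω : Type*} [MeasureSpace Ω]
    {X : ℕ → Ω → ℝ} (hid : ∀ i, IdentDistrib (X i) (X 0))
    {g : ℝ → ℝ} (hg : Measurable g) (i : ℕ) :
    (∫ ω, g (X i ω)) = ∫ ω, g (X 0 ω) :=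
  ((hid i).comp hg).integral_eq

lemma s7_transfer_int {Ω : Type*} [MeasureSpace Ω]
    {X : ℕ → Ω → ℝ} (hid : ∀ i, IdentDistrib (X i) (X 0))
    {g : ℝ → ℝ} (hg : Measurable g) (i : ℕ)
    (h0 : Integrable (fun ω => g (X 0 ω))) : Integrable (fun ω => g (X i ω)) :=
  ((hid i).comp hg).integrable_iff.mpr h0

/-- Theorem 1.2 (converse): if for i.i.d. `X₁, X₂, …` the comparison
`(E max_{i≤n} |X_i|^p)^{1/p} ≤ L [E max_{i≤n}|X_i| + ‖X₁‖_p]` holds for all `p ≥ 1` and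
all `n`, then `‖X₁‖_{2p} ≤ (4 + 1/(2L))(16L² + 1) ‖X₁‖_p` for all `p ≥ 2`. -/
theorem stmt7 {Ω : Type*} [MeasureSpace Ω] [IsProbabilityMeasure (ℙ : Measure Ω)]
    (X : ℕ → Ω → ℝ) (hX : ∀ i, Measurable (X i))
    (hindep : iIndepFun X)
    (hid : ∀ i, IdentDistrib (X i) (X 0))
    (hmom : ∀ p : ℝ, 1 ≤ p → Integrable (fun ω => |X 0 ω| ^ p))
    (L : ℝ) (hL : 1 ≤ L)
    (hcomp : ∀ p : ℝ, 1 ≤ p → ∀ n : ℕ, 0 < n →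
      (∫ ω, (⨆ i : Fin n, |X i ω|) ^ p) ^ (1 / p)
        ≤ L * ((∫ ω, ⨆ i : Fin n, |X i ω|) + (∫ ω, |X 0 ω| ^ p) ^ (1 / p))) :
    ∀ p : ℝ, 2 ≤ p →
      (∫ ω, |X 0 ω| ^ (2 * p)) ^ (1 / (2 * p))
        ≤ (4 + 1 / (2 * L)) * (16 * L ^ 2 + 1) * (∫ ω, |X 0 ω| ^ p) ^ (1 / p) := by
  intro p hp
  have hp1 : (1:ℝ) ≤ p := by linarith
  have hp0 : (0:ℝ) < p := by linarith
  have h2p1 : (1:ℝ) ≤ 2 * p := by linarith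
  have h2p0 : (0:ℝ) < 2 * p := by linarith
  have hL0 : (0:ℝ) < L := by linarith
  have hmp : Measurable fun x : ℝ => |x| ^ p :=
    (Real.continuous_rpow_const hp0.le).measurable.comp measurable_abs
  have hm2p : Measurable fun x : ℝ => |x| ^ (2*p) :=
    (Real.continuous_rpow_const h2p0.le).measurable.comp measurable_abs
  set Ib := ∫ ω, |X 0 ω| ^ p with hIb_def
  set Ia := ∫ ω, |X 0 ω| ^ (2 * p) with hIa_def
  have hIb0 : 0 ≤ Ib := integral_nonneg fun ω => Real.rpow_nonneg (abs_nonneg _) _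
  have hIa0 : 0 ≤ Ia := integral_nonneg fun ω => Real.rpow_nonneg (abs_nonneg _) _
  set b := Ib ^ (1/p) with hb_def
  set a := Ia ^ (1/(2*p)) with ha_def
  have hb0 : 0 ≤ b := Real.rpow_nonneg hIb0 _
  have ha0 : 0 ≤ a := Real.rpow_nonneg hIa0 _
  have hbp : b ^ p = Ib := by
    rw [hb_def, one_div, Real.rpow_inv_rpow hIb0 hp0.ne']
  have ha2p : a ^ (2*p) = Ia := by
    rw [ha_def, one_div, Real.rpow_inv_rpow hIa0 h2p0.ne']
  set κ := 4 + 1/(2*L) with hκ_def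
  have hκ4 : 4 ≤ κ := by
    rw [hκ_def]
    have : 0 < 1/(2*L) := by positivity
    linarith
  have hκ0 : (0:ℝ) < κ := by linarith
  have hκne : κ ≠ 0 := ne_of_gt hκ0
  set n := ⌊(4*L)^(2*p)⌋₊ + 1 with hn_def
  have hnpos : 0 < n := Nat.succ_pos _
  have hn_ge : (4*L)^(2*p) ≤ (n:ℝ) := by
    rw [hn_def]; push_cast; exact (Nat.lt_floor_add_one _).le
  have hn_le : (n:ℝ) ≤ (4*L)^(2*p) + 1 := by
    rw [hn_def]; push_cast
    have := Nat.floor_le (Real.rpow_nonneg (by linarith : (0:ℝ) ≤ 4*L) (2*p))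
    linarith
  have hnR : (0:ℝ) < (n:ℝ) := by exact_mod_cast hnpos
  have h2pow : (16:ℝ) ≤ 2 ^ (2*p) := by
    have h1 : (2:ℝ) ^ (4:ℝ) ≤ 2 ^ (2*p) :=
      Real.rpow_le_rpow_of_exponent_le one_le_two (by linarith)
    have h24 : (2:ℝ) ^ (4:ℝ) = 16 := by
      rw [show (4:ℝ) = ((4:ℕ):ℝ) by norm_num, Real.rpow_natCast]; norm_num
    linarith
  have hn_rpow : (n:ℝ) ^ (1/p) ≤ 16 * L^2 + 1 := by
    have h1 : (n:ℝ) ^ (1/p) ≤ ((4*L)^(2*p) + 1) ^ (1/p) :=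
      Real.rpow_le_rpow hnR.le hn_le (by positivity)
    have h2 : ((4*L)^(2*p) + 1) ^ (1/p) ≤ ((4*L)^(2*p)) ^ (1/p) + (1:ℝ) ^ (1/p) :=
      s7_rpow_add_le (Real.rpow_nonneg (by linarith) _) zero_le_one (by positivity)
        (by rw [div_le_one hp0]; linarith)
    have h3 : ((4*L)^(2*p)) ^ (1/p) = 16 * L^2 := by
      rw [← Real.rpow_mul (by linarith : (0:ℝ) ≤ 4*L)]
      have he : 2 * p * (1/p) = 2 := by field_simp
      rw [he, show ((2:ℝ) = ((2:ℕ):ℝ)) by norm_num, Real.rpow_natCast]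
      ring
    rw [Real.one_rpow] at h2
    linarith
  -- sup machinery
  haveI hne : Nonempty (Fin n) := ⟨⟨0, hnpos⟩⟩
  set Sf := fun ω => ⨆ i : Fin n, |X i ω| with hSf_def
  have hcompn : (∫ ω, Sf ω ^ (2*p)) ^ (1/(2*p)) ≤ L * ((∫ ω, Sf ω) + a) := by
    have h := hcomp (2*p) h2p1 n hnpos
    rw [← hIa_def, ← ha_def] at h
    exact h
  clear_value Ib Ia b a κ n
  have hSmeas : Measurable Sf := Measurable.iSup fun i => measurable_abs.comp (hX i)
  have hbdd : ∀ ω, BddAbove (Set.range fun i : Fin n => |X i ω|) :=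
    fun ω => Set.Finite.bddAbove (Set.finite_range _)
  have hSle : ∀ ω (i : Fin n), |X i ω| ≤ Sf ω := fun ω i => le_ciSup (hbdd ω) i
  have hS0 : ∀ ω, 0 ≤ Sf ω := fun ω => (abs_nonneg _).trans (hSle ω ⟨0, hnpos⟩)
  have hSexists : ∀ ω, ∃ i : Fin n, Sf ω = |X i ω| := by
    intro ω
    obtain ⟨i, hi⟩ := Finite.exists_max fun i : Fin n => |X i ω|
    exact ⟨i, le_antisymm (ciSup_le hi) (hSle ω i)⟩
  clear_value Sf
  have hInt_r : ∀ r : ℝ, 1 ≤ r → ∀ i : ℕ, Integrable fun ω => |X i ω| ^ r := fun r hr i =>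
    s7_transfer_int hid
      ((Real.continuous_rpow_const (by linarith)).measurable.comp measurable_abs) i (hmom r hr)
  have hSpow_le : ∀ (r : ℝ), ∀ ω, Sf ω ^ r ≤ ∑ i : Fin n, |X i ω| ^ r := by
    intro r ω
    obtain ⟨i, hi⟩ := hSexists ω
    rw [hi]
    exact Finset.single_le_sum (f := fun j : Fin n => |X (j:ℕ) ω| ^ r)
      (fun j _ => Real.rpow_nonneg (abs_nonneg _) _) (Finset.mem_univ i)
  have hSint_pow : ∀ r : ℝ, 1 ≤ r → Integrable fun ω => Sf ω ^ r := by
    intro r hr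
    have hsumint : Integrable fun ω => ∑ i : Fin n, |X (i:ℕ) ω| ^ r :=
      integrable_finset_sum _ fun i _ => hInt_r r hr (i:ℕ)
    refine Integrable.mono hsumint
      (((Real.continuous_rpow_const (by linarith : (0:ℝ) ≤ r)).measurable.comp
        hSmeas).aestronglyMeasurable) (ae_of_all _ fun ω => ?_)
    rw [Real.norm_of_nonneg (Real.rpow_nonneg (hS0 ω) _), Real.norm_of_nonneg
      (Finset.sum_nonneg fun j _ => Real.rpow_nonneg (abs_nonneg _) _)]
    exact hSpow_le r ω
  have hSint : Integrable Sf := by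
    have hIabs : ∀ i : ℕ, Integrable fun ω => |X i ω| := by
      intro i
      refine s7_transfer_int hid measurable_abs i ?_
      have h1 := hmom 1 le_rfl
      simpa [Real.rpow_one] using h1
    have hsumint : Integrable fun ω => ∑ i : Fin n, |X (i:ℕ) ω| :=
      integrable_finset_sum _ fun i _ => hIabs (i:ℕ)
    refine Integrable.mono hsumint hSmeas.aestronglyMeasurable (ae_of_all _ fun ω => ?_)
    obtain ⟨i, hi⟩ := hSexists ω
    rw [Real.norm_of_nonneg (hS0 ω), Real.norm_of_nonneg
      (Finset.sum_nonneg fun j _ => abs_nonneg _), hi]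
    exact Finset.single_le_sum (f := fun j : Fin n => |X (j:ℕ) ω|)
      (fun j _ => abs_nonneg _) (Finset.mem_univ i)
  have hSp_int_le : ∫ ω, Sf ω ^ p ≤ (n:ℝ) * Ib := by
    have h1 : ∫ ω, Sf ω ^ p ≤ ∫ ω, ∑ i : Fin n, |X i ω| ^ p :=
      integral_mono (hSint_pow p hp1) (integrable_finset_sum _ fun i _ => hInt_r p hp1 (i:ℕ))
        (hSpow_le p)
    rw [integral_finset_sum (Finset.univ : Finset (Fin n))
      (fun i _ => hInt_r p hp1 (i:ℕ))] at h1
    have h2 : ∀ i : Fin n, (∫ ω, |X (i:ℕ) ω| ^ p) = Ib := fun i =>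
      (s7_transfer hid hmp i).trans hIb_def.symm
    rw [Finset.sum_congr rfl fun i _ => h2 i] at h1
    simpa [Finset.sum_const, Finset.card_univ, nsmul_eq_mul] using h1
  have hES : ∫ ω, Sf ω ≤ (n:ℝ)^(1/p) * b := by
    have h1 : ∫ ω, Sf ω ≤ (∫ ω, Sf ω ^ p) ^ (1/p) :=
      s7_int_le_rpow (by linarith) hSmeas hS0 (hSint_pow p hp1)
    have h2 : (∫ ω, Sf ω ^ p) ^ (1/p) ≤ ((n:ℝ) * Ib) ^ (1/p) :=
      Real.rpow_le_rpow (integral_nonneg fun ω => Real.rpow_nonneg (hS0 ω) _) hSp_int_le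
        (by positivity)
    have h3 : ((n:ℝ) * Ib) ^ (1/p) = (n:ℝ)^(1/p) * b := by
      rw [Real.mul_rpow hnR.le hIb0, hb_def]
    linarith
  set t := a / κ with ht_def
  have ht0 : 0 ≤ t := div_nonneg ha0 hκ0.le
  set q0 := ∫ ω, s7ind t (X 0 ω) with hq0_def
  have hind_int : ∀ i : ℕ, Integrable fun ω => s7ind t (X i ω) := by
    intro i
    refine Integrable.mono' (integrable_const 1)
      ((s7ind_meas t).comp (hX i)).aestronglyMeasurable (ae_of_all _ fun ω => ?_)
    rw [Real.norm_of_nonneg (s7ind_nonneg _ _)]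
    exact s7ind_le_one _ _
  have hq00 : 0 ≤ q0 := integral_nonneg fun ω => s7ind_nonneg _ _
  rcases le_or_gt (1 / (n:ℝ)) q0 with hq | hq
  · -- case 1: large tail
    have hmark : t ^ p * q0 ≤ Ib := by
      have hb : ∀ ω, t ^ p * s7ind t (X 0 ω) ≤ |X 0 ω| ^ p := by
        intro ω
        unfold s7ind
        split
        · rename_i h
          rw [mul_one]
          exact Real.rpow_le_rpow ht0 h hp0.le
        · rw [mul_zero]; positivity
      have h := integral_mono ((hind_int 0).const_mul (t^p)) (hmom p hp1) hb
      rw [integral_const_mul] at h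
      rw [hIb_def]
      exact h
    have h2 : t ^ p ≤ (n:ℝ) * Ib := by
      have h1 : t^p * (1/(n:ℝ)) ≤ Ib :=
        le_trans (mul_le_mul_of_nonneg_left hq (by positivity)) hmark
      rw [mul_one_div, div_le_iff₀ hnR] at h1
      linarith
    have h3 : t ≤ (n:ℝ)^(1/p) * b := by
      calc t = (t ^ p) ^ (1/p) := by rw [one_div, Real.rpow_rpow_inv ht0 hp0.ne']
      _ ≤ ((n:ℝ) * Ib) ^ (1/p) := Real.rpow_le_rpow (Real.rpow_nonneg ht0 _) h2 (by positivity)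
      _ = (n:ℝ)^(1/p) * b := by rw [Real.mul_rpow hnR.le hIb0, hb_def]
    have ha_eq : a = κ * t := by rw [ht_def]; field_simp
    calc a = κ * t := ha_eq
    _ ≤ κ * ((n:ℝ)^(1/p) * b) := mul_le_mul_of_nonneg_left h3 hκ0.le
    _ ≤ κ * ((16*L^2+1) * b) :=
        mul_le_mul_of_nonneg_left (mul_le_mul_of_nonneg_right hn_rpow hb0) hκ0.le
    _ = κ * (16*L^2+1) * b := by ring
  · -- case 2: small tail
    set m := (n+1)/2 with hm_def
    have hm_le_n : m ≤ n := by omega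
    have h2m : n ≤ 2 * m := by omega
    have h2m1 : 2 * (m - 1) ≤ n := by omega
    set g2 := fun x : ℝ => |x| ^ (2*p) * s7ind t x with hg2_def
    have hg2m : Measurable g2 := hm2p.mul (s7ind_meas t)
    have hg2nn : ∀ x, 0 ≤ g2 x := fun x =>
      mul_nonneg (Real.rpow_nonneg (abs_nonneg _) _) (s7ind_nonneg _ _)
    have hg2le : ∀ x, g2 x ≤ |x| ^ (2*p) := by
      intro x
      have h := mul_le_mul_of_nonneg_left (s7ind_le_one t x)
        (Real.rpow_nonneg (abs_nonneg x) (2*p))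
      simpa using h
    have hG_int : ∀ i : ℕ, Integrable fun ω => g2 (X i ω) := by
      intro i
      refine s7_transfer_int hid hg2m i ?_
      refine Integrable.mono (hmom (2*p) h2p1) (hg2m.comp (hX 0)).aestronglyMeasurable
        (ae_of_all _ fun ω => ?_)
      rw [Real.norm_of_nonneg (hg2nn _), Real.norm_of_nonneg (Real.rpow_nonneg (abs_nonneg _) _)]
      exact hg2le _
    set M := ∫ ω, g2 (X 0 ω) with hM_def
    have hM0 : 0 ≤ M := integral_nonneg fun ω => hg2nn _
    have hGi : ∀ i : ℕ, (∫ ω, g2 (X i ω)) = M := fun i => s7_transfer hid hg2m i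
    have hqi : ∀ i : ℕ, (∫ ω, s7ind t (X i ω)) = q0 := fun i => s7_transfer hid (s7ind_meas t) i
    have hrest_int : Integrable fun ω => |X 0 ω| ^ (2*p) * (1 - s7ind t (X 0 ω)) := by
      refine Integrable.mono (hmom (2*p) h2p1)
        ((hm2p.comp (hX 0)).mul
          ((measurable_const.sub (s7ind_meas t)).comp (hX 0))).aestronglyMeasurable
        (ae_of_all _ fun ω => ?_)
      have h01 : 0 ≤ 1 - s7ind t (X 0 ω) := by linarith [s7ind_le_one t (X 0 ω)]
      have h11 : 1 - s7ind t (X 0 ω) ≤ 1 := by linarith [s7ind_nonneg t (X 0 ω)]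
      rw [Real.norm_of_nonneg (mul_nonneg (Real.rpow_nonneg (abs_nonneg _) _) h01),
        Real.norm_of_nonneg (Real.rpow_nonneg (abs_nonneg _) _)]
      nlinarith [Real.rpow_nonneg (abs_nonneg (X 0 ω)) (2*p)]
    have hMge : a^(2*p) / 2 ≤ M := by
      have hsplit : Ia = M + ∫ ω, |X 0 ω| ^ (2*p) * (1 - s7ind t (X 0 ω)) := by
        rw [hM_def, ← integral_add (hG_int 0) hrest_int, hIa_def]
        congr 1
        funext ω
        rw [hg2_def]
        ring
      have hrest_le : (∫ ω, |X 0 ω| ^ (2*p) * (1 - s7ind t (X 0 ω))) ≤ t^(2*p) := by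
        have hb2 : ∀ ω, |X 0 ω| ^ (2*p) * (1 - s7ind t (X 0 ω)) ≤ t^(2*p) := by
          intro ω
          unfold s7ind
          split
          · rename_i h
            simp only [sub_self, mul_zero]
            positivity
          · rename_i h
            push_neg at h
            simp only [sub_zero, mul_one]
            exact Real.rpow_le_rpow (abs_nonneg _) h.le h2p0.le
        calc (∫ ω, |X 0 ω| ^ (2*p) * (1 - s7ind t (X 0 ω))) ≤ ∫ _ω, t^(2*p) :=
              integral_mono hrest_int (integrable_const _) hb2
        _ = t^(2*p) := by simp
      have hκ2p : (2:ℝ) ≤ κ ^ (2*p) := by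
        have hh1 : (4:ℝ) ^ (1:ℝ) ≤ (4:ℝ) ^ (2*p) :=
          Real.rpow_le_rpow_of_exponent_le (by norm_num) (by linarith)
        have hh2 : (4:ℝ)^(2*p) ≤ κ^(2*p) := Real.rpow_le_rpow (by norm_num) hκ4 h2p0.le
        rw [Real.rpow_one] at hh1
        linarith
      have ht2p : t^(2*p) = a^(2*p) / κ^(2*p) := by rw [ht_def, Real.div_rpow ha0 hκ0.le]
      have hta : t^(2*p) ≤ a^(2*p)/2 := by
        rw [ht2p, div_le_div_iff₀ (by positivity) (by norm_num)]
        have hmm := mul_le_mul_of_nonneg_left hκ2p (Real.rpow_nonneg ha0 (2*p))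
        linarith
      linarith [ha2p]
    have hH_int : ∀ i j : ℕ, Integrable fun ω => g2 (X i ω) * s7ind t (X j ω) := by
      intro i j
      refine Integrable.mono (hG_int i)
        ((hg2m.comp (hX i)).mul ((s7ind_meas t).comp (hX j))).aestronglyMeasurable
        (ae_of_all _ fun ω => ?_)
      rw [Real.norm_of_nonneg (mul_nonneg (hg2nn _) (s7ind_nonneg _ _)),
        Real.norm_of_nonneg (hg2nn _)]
      exact mul_le_of_le_one_right (hg2nn _) (s7ind_le_one _ _)
    have hH_eq : ∀ i j : ℕ, i ≠ j → (∫ ω, g2 (X i ω) * s7ind t (X j ω)) = M * q0 := by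
      intro i j hij
      have hif := (hindep.indepFun hij).comp hg2m (s7ind_meas t)
      have h := ProbabilityTheory.IndepFun.integral_fun_mul_eq_mul_integral hif (hg2m.comp (hX i)).aestronglyMeasurable
        ((s7ind_meas t).comp (hX j)).aestronglyMeasurable
      simp only [Function.comp_def] at h
      rw [hGi i, hqi j] at h
      exact h
    set Ff := fun (i : ℕ) (ω : Ω) =>
      g2 (X i ω) * ∏ j ∈ (Finset.range m).erase i, (1 - s7ind t (X j ω)) with hFf_def
    have hprod_nn : ∀ (i : ℕ) ω, 0 ≤ ∏ j ∈ (Finset.range m).erase i, (1 - s7ind t (X j ω)) :=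
      fun i ω => Finset.prod_nonneg fun j _ => sub_nonneg.mpr (s7ind_le_one t (X j ω))
    have hprod_le1 : ∀ (i : ℕ) ω, (∏ j ∈ (Finset.range m).erase i, (1 - s7ind t (X j ω))) ≤ 1 :=
      fun i ω => Finset.prod_le_one (fun j _ => sub_nonneg.mpr (s7ind_le_one t (X j ω)))
        (fun j _ => sub_le_self 1 (s7ind_nonneg t (X j ω)))
    have hF_meas : ∀ i : ℕ, Measurable (Ff i) := by
      intro i
      exact (hg2m.comp (hX i)).mul (Finset.measurable_prod _ fun j _ =>
        measurable_const.sub ((s7ind_meas t).comp (hX j)))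
    have hF_int : ∀ i : ℕ, Integrable (Ff i) := by
      intro i
      refine Integrable.mono (hG_int i) (hF_meas i).aestronglyMeasurable
        (ae_of_all _ fun ω => ?_)
      rw [Real.norm_of_nonneg (mul_nonneg (hg2nn _) (hprod_nn i ω)),
        Real.norm_of_nonneg (hg2nn _)]
      exact mul_le_of_le_one_right (hg2nn _) (hprod_le1 i ω)
    have hF_lb : ∀ i ∈ Finset.range m, M - ((m-1:ℕ):ℝ) * (M * q0) ≤ ∫ ω, Ff i ω := by
      intro i hi
      have hpt : ∀ ω, g2 (X i ω) - ∑ j ∈ (Finset.range m).erase i, g2 (X i ω) * s7ind t (X j ω)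
          ≤ Ff i ω := by
        intro ω
        have h := s7_one_sub_sum_le_prod ((Finset.range m).erase i)
          (fun j => s7ind t (X j ω)) (fun j _ => s7ind_nonneg _ _) (fun j _ => s7ind_le_one _ _)
        have h2 := mul_le_mul_of_nonneg_left h (hg2nn (X i ω))
        rw [mul_sub, mul_one, Finset.mul_sum] at h2
        exact h2
      have hint1 : Integrable fun ω =>
          g2 (X i ω) - ∑ j ∈ (Finset.range m).erase i, g2 (X i ω) * s7ind t (X j ω) :=
        (hG_int i).sub (integrable_finset_sum _ fun j _ => hH_int i j)
      have hmono := integral_mono hint1 (hF_int i) hpt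
      rw [integral_sub (hG_int i) (integrable_finset_sum _ fun j _ => hH_int i j),
        integral_finset_sum _ (fun j _ => hH_int i j), hGi i] at hmono
      have hcard : ((Finset.range m).erase i).card = m - 1 := by
        rw [Finset.card_erase_of_mem hi, Finset.card_range]
      have hsum : (∑ j ∈ (Finset.range m).erase i, ∫ ω, g2 (X i ω) * s7ind t (X j ω))
          = ((m-1:ℕ):ℝ) * (M * q0) := by
        rw [Finset.sum_congr rfl fun j hj => hH_eq i j (Ne.symm (Finset.ne_of_mem_erase hj)),
          Finset.sum_const, hcard, nsmul_eq_mul]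
      rw [hsum] at hmono
      exact hmono
    have hsum_le : ∀ ω, (∑ i ∈ Finset.range m, Ff i ω) ≤ Sf ω ^ (2*p) := by
      intro ω
      have hTnn : 0 ≤ Sf ω ^ (2*p) := Real.rpow_nonneg (hS0 ω) _
      by_cases hex : ∃ i ∈ Finset.range m, Ff i ω ≠ 0
      · obtain ⟨i0, hi0m, hi0⟩ := hex
        have hind1 : t ≤ |X i0 ω| := by
          by_contra hcon
          apply hi0
          have hz : s7ind t (X i0 ω) = 0 := by unfold s7ind; rw [if_neg hcon]
          rw [hFf_def]
          simp only [hg2_def, hz, mul_zero, zero_mul]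
        have hzero : ∀ j ∈ Finset.range m, j ≠ i0 → Ff j ω = 0 := by
          intro j hj hnej
          have hmem : i0 ∈ (Finset.range m).erase j :=
            Finset.mem_erase.mpr ⟨Ne.symm hnej, hi0m⟩
          have hzeroP : (∏ k ∈ (Finset.range m).erase j, (1 - s7ind t (X k ω))) = 0 := by
            refine Finset.prod_eq_zero hmem ?_
            have ho : s7ind t (X i0 ω) = 1 := by unfold s7ind; rw [if_pos hind1]
            rw [ho]; ring
          rw [hFf_def]
          simp only [hzeroP, mul_zero]
        rw [Finset.sum_eq_single_of_mem i0 hi0m hzero]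
        have hb1 : Ff i0 ω ≤ g2 (X i0 ω) := mul_le_of_le_one_right (hg2nn _) (hprod_le1 i0 ω)
        have hb2 : g2 (X i0 ω) ≤ |X i0 ω| ^ (2*p) := hg2le _
        have hi0n : i0 < n := lt_of_lt_of_le (Finset.mem_range.mp hi0m) hm_le_n
        have hb3 : |X i0 ω| ^ (2*p) ≤ Sf ω ^ (2*p) :=
          Real.rpow_le_rpow (abs_nonneg _) (hSle ω ⟨i0, hi0n⟩) h2p0.le
        linarith
      · push_neg at hex
        rw [Finset.sum_eq_zero hex]
        exact hTnn
    have hchain : (m:ℝ) * (M - ((m-1:ℕ):ℝ) * (M * q0)) ≤ ∫ ω, Sf ω ^ (2*p) := by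
      have h1 : (∫ ω, ∑ i ∈ Finset.range m, Ff i ω) ≤ ∫ ω, Sf ω ^ (2*p) :=
        integral_mono (integrable_finset_sum _ fun i _ => hF_int i) (hSint_pow (2*p) h2p1)
          hsum_le
      rw [integral_finset_sum _ (fun i _ => hF_int i)] at h1
      have h2 : (m:ℝ) * (M - ((m-1:ℕ):ℝ) * (M * q0))
          = ∑ _i ∈ Finset.range m, (M - ((m-1:ℕ):ℝ) * (M * q0)) := by
        rw [Finset.sum_const, Finset.card_range, nsmul_eq_mul]
      rw [h2]
      exact le_trans (Finset.sum_le_sum fun i hi => hF_lb i hi) h1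
    have hmq : ((m-1:ℕ):ℝ) * q0 ≤ 1/2 := by
      have hc : 2 * ((m-1:ℕ):ℝ) ≤ (n:ℝ) := by exact_mod_cast h2m1
      have hq0n : q0 ≤ 1/(n:ℝ) := le_of_lt hq
      have s1 : ((m-1:ℕ):ℝ) * q0 ≤ ((m-1:ℕ):ℝ) * (1/(n:ℝ)) :=
        mul_le_mul_of_nonneg_left hq0n (by positivity)
      have s2 : ((m-1:ℕ):ℝ) * (1/(n:ℝ)) ≤ ((n:ℝ)/2) * (1/(n:ℝ)) :=
        mul_le_mul_of_nonneg_right (by linarith) (by positivity)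
      have s3 : (n:ℝ)/2 * (1/(n:ℝ)) = 1/2 := by field_simp
      linarith
    have hmn : (n:ℝ) ≤ 2*(m:ℝ) := by exact_mod_cast h2m
    have hMhalf : M/2 ≤ M - ((m-1:ℕ):ℝ) * (M * q0) := by
      have h := mul_le_mul_of_nonneg_left hmq hM0
      have he : ((m-1:ℕ):ℝ) * (M * q0) = M * (((m-1:ℕ):ℝ) * q0) := by ring
      rw [he]
      linarith
    have hfinal1 : (n:ℝ) * a^(2*p) / 8 ≤ ∫ ω, Sf ω ^ (2*p) := by
      have s1 : (n:ℝ)/2 * (M/2) ≤ (m:ℝ) * (M/2) :=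
        mul_le_mul_of_nonneg_right (by linarith) (by linarith)
      have s2 : (m:ℝ) * (M/2) ≤ (m:ℝ) * (M - ((m-1:ℕ):ℝ) * (M * q0)) :=
        mul_le_mul_of_nonneg_left hMhalf (by positivity)
      have s3 : (n:ℝ)/2 * (a^(2*p)/2/2) ≤ (n:ℝ)/2 * (M/2) := by
        apply mul_le_mul_of_nonneg_left _ (by positivity)
        linarith
      have s4 : (n:ℝ) * a^(2*p)/8 = (n:ℝ)/2 * (a^(2*p)/2/2) := by ring
      linarith [hchain]
    have h2La : 2*L*a ≤ (∫ ω, Sf ω ^ (2*p)) ^ (1/(2*p)) := by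
      have hmul : (2:ℝ)^(2*p) * (2*L)^(2*p) = (4*L)^(2*p) := by
        rw [← Real.mul_rpow (by norm_num : (0:ℝ) ≤ 2) (by linarith : (0:ℝ) ≤ 2*L)]
        congr 1
        ring
      have hkey : (2*L)^(2*p) ≤ (n:ℝ)/8 := by
        have h2L0 : (0:ℝ) ≤ (2*L)^(2*p) := Real.rpow_nonneg (by linarith) _
        have h1 := mul_le_mul_of_nonneg_right h2pow h2L0
        rw [hmul] at h1
        linarith [hn_ge]
      have h2 : ((2*L)*a)^(2*p) ≤ ∫ ω, Sf ω ^ (2*p) := by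
        rw [Real.mul_rpow (by linarith : (0:ℝ) ≤ 2*L) ha0]
        have s1 : (2*L)^(2*p) * a^(2*p) ≤ ((n:ℝ)/8) * a^(2*p) :=
          mul_le_mul_of_nonneg_right hkey (Real.rpow_nonneg ha0 _)
        have s2 : ((n:ℝ)/8) * a^(2*p) = (n:ℝ) * a^(2*p) / 8 := by ring
        linarith [hfinal1]
      calc 2*L*a = (((2*L)*a)^(2*p))^(1/(2*p)) := by
            rw [one_div, Real.rpow_rpow_inv (by positivity) h2p0.ne']
      _ ≤ (∫ ω, Sf ω ^ (2*p))^(1/(2*p)) :=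
          Real.rpow_le_rpow (Real.rpow_nonneg (by positivity) _) h2 (by positivity)
    have hfin : a ≤ ∫ ω, Sf ω := by
      have h1 := le_trans h2La hcompn
      have hE : L * ((∫ ω, Sf ω) + a) = L*(∫ ω, Sf ω) + L*a := by ring
      rw [hE] at h1
      have h2 : L * a ≤ L * (∫ ω, Sf ω) := by linarith
      exact le_of_mul_le_mul_left h2 hL0
    have hlast : (16*L^2+1) * b ≤ κ * (16*L^2+1) * b := by
      have hnn : (0:ℝ) ≤ (16*L^2+1) * b := by positivity
      have hE : κ * (16*L^2+1) * b - (16*L^2+1) * b = (κ-1) * ((16*L^2+1) * b) := by ring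
      have hgood : 0 ≤ (κ-1) * ((16*L^2+1) * b) :=
        mul_nonneg (by linarith) hnn
      linarith
    calc a ≤ ∫ ω, Sf ω := hfin
    _ ≤ (n:ℝ)^(1/p) * b := hES
    _ ≤ (16*L^2+1) * b := mul_le_mul_of_nonneg_right hn_rpow hb0
    _ ≤ κ * (16*L^2+1) * b := hlast
end

section
/- Let X₁,…,Xₙ be independent real random variables with E X_i² = 1 for all i, let a > 0, p ≥ 1, and let (t_i*) be the nonincreasing rearrangement of (|t_i|). If a ≥ (1/p)·(Σ_{i≤p} t_i* + √p·(Σ_{i>p}(t_i*)²)^{1/2}), then Σ_{i=1}^n E(|t_i X_i| − a)₊ ≤ 2pa. -/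
open MeasureTheory ProbabilityTheory

lemma bound1 {Ω : Type*} [MeasureSpace Ω] [IsProbabilityMeasure (ℙ : Measure Ω)]
    (X : Ω → ℝ) (hX : Measurable X) (h2 : Integrable (fun ω => X ω ^ 2))
    (hvar : ∫ ω, X ω ^ 2 = 1) (t a : ℝ) (ha : 0 < a) :
    ∫ ω, max (|t * X ω| - a) 0 ≤ |t| := by
  have hg : Integrable (fun ω => |t| * (X ω ^ 2 + 1) / 2) := by
    have := ((h2.add (integrable_const 1)).const_mul |t|).div_const 2
    simpa [mul_div_assoc] using this
  have h := integral_mono_of_nonneg (f := fun ω => max (|t * X ω| - a) 0)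
      (g := fun ω => |t| * (X ω ^ 2 + 1) / 2)
      (Filter.Eventually.of_forall fun ω => le_max_right _ _) hg
      (Filter.Eventually.of_forall fun ω => by
        have h1 : |t * X ω| = |t| * |X ω| := abs_mul _ _
        have h2' : |X ω| ≤ (X ω ^ 2 + 1) / 2 := by nlinarith [sq_nonneg (|X ω| - 1), sq_abs (X ω)]
        have h3 : max (|t * X ω| - a) 0 ≤ |t * X ω| := by
          have := abs_nonneg (t * X ω)
          have := ha.le
          rcases max_cases (|t * X ω| - a) 0 with ⟨h, _⟩ | ⟨h, _⟩ <;> rw [h] <;> linarith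
        calc max (|t * X ω| - a) 0 ≤ |t| * |X ω| := by rw [← h1]; exact h3
          _ ≤ |t| * ((X ω ^ 2 + 1) / 2) := by
              exact mul_le_mul_of_nonneg_left h2' (abs_nonneg t)
          _ = |t| * (X ω ^ 2 + 1) / 2 := by ring)
  calc ∫ ω, max (|t * X ω| - a) 0 ≤ ∫ ω, |t| * (X ω ^ 2 + 1) / 2 := h
    _ = |t| := by
        rw [show (fun ω => |t| * (X ω ^ 2 + 1) / 2) = fun ω => (|t| / 2) * (X ω ^ 2 + 1) by
          funext ω; ring]
        rw [integral_const_mul, integral_add h2 (integrable_const 1), hvar,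
          integral_const]
        simp; ring

lemma bound2 {Ω : Type*} [MeasureSpace Ω] [IsProbabilityMeasure (ℙ : Measure Ω)]
    (X : Ω → ℝ) (hX : Measurable X) (h2 : Integrable (fun ω => X ω ^ 2))
    (hvar : ∫ ω, X ω ^ 2 = 1) (t a : ℝ) (ha : 0 < a) :
    ∫ ω, max (|t * X ω| - a) 0 ≤ t ^ 2 / a := by
  have hg : Integrable (fun ω => t ^ 2 / a * X ω ^ 2) := h2.const_mul _
  have h := integral_mono_of_nonneg (f := fun ω => max (|t * X ω| - a) 0)
      (g := fun ω => t ^ 2 / a * X ω ^ 2)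
      (Filter.Eventually.of_forall fun ω => le_max_right _ _) hg
      (Filter.Eventually.of_forall fun ω => by
        set y := |t * X ω| with hy
        have hy0 : 0 ≤ y := abs_nonneg _
        have hy2 : y ^ 2 = t ^ 2 * X ω ^ 2 := by
          rw [hy, sq_abs, mul_pow]
        have key : max (y - a) 0 ≤ y ^ 2 / a := by
          rcases max_cases (y - a) 0 with ⟨h, _⟩ | ⟨h, _⟩ <;> rw [h]
          · rw [le_div_iff₀ ha]
            nlinarith [sq_nonneg (y - a)]
          · positivity
        calc max (y - a) 0 ≤ y ^ 2 / a := key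
          _ = t ^ 2 / a * X ω ^ 2 := by rw [hy2]; ring)
  calc ∫ ω, max (|t * X ω| - a) 0 ≤ ∫ ω, t ^ 2 / a * X ω ^ 2 := h
    _ = t ^ 2 / a := by rw [integral_const_mul, hvar, mul_one]

/-- If `E X_i² = 1`, `(t_i*)` is the nonincreasing rearrangement of `(|t_i|)` (realized
by a permutation `σ`), and `a ≥ (1/p)(∑_{i≤p} t_i* + √p (∑_{i>p}(t_i*)²)^{1/2})`, then
`∑ E(|t_i X_i| - a)₊ ≤ 2pa`. -/
theorem stmt9 {Ω : Type*} [MeasureSpace Ω] [IsProbabilityMeasure (ℙ : Measure Ω)]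
    (n : ℕ) (X : Fin n → Ω → ℝ) (hX : ∀ i, Measurable (X i))
    (hindep : iIndepFun X)
    (h2 : ∀ i, Integrable (fun ω => X i ω ^ 2)) (hvar : ∀ i, ∫ ω, X i ω ^ 2 = 1)
    (t : Fin n → ℝ) (σ : Equiv.Perm (Fin n))
    (hσ : ∀ i j : Fin n, i ≤ j → |t (σ j)| ≤ |t (σ i)|)
    (p a : ℝ) (hp : 1 ≤ p) (ha : 0 < a)
    (haa : (1 / p) * ((∑ i ∈ Finset.univ.filter (fun i : Fin n => (i : ℕ) < ⌊p⌋₊), |t (σ i)|)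
        + Real.sqrt p *
          (∑ i ∈ Finset.univ.filter (fun i : Fin n => ⌊p⌋₊ ≤ (i : ℕ)), |t (σ i)| ^ 2)
            ^ ((1 : ℝ) / 2)) ≤ a) :
    ∑ i, ∫ ω, max (|t i * X i ω| - a) 0 ≤ 2 * p * a := by
  have hp0 : (0 : ℝ) < p := lt_of_lt_of_le one_pos hp
  set S1 := ∑ i ∈ Finset.univ.filter (fun i : Fin n => (i : ℕ) < ⌊p⌋₊), |t (σ i)| with hS1def
  set Qs := ∑ i ∈ Finset.univ.filter (fun i : Fin n => ⌊p⌋₊ ≤ (i : ℕ)), |t (σ i)| ^ 2 with hQsdef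
  have hS1 : 0 ≤ S1 := Finset.sum_nonneg fun i _ => abs_nonneg _
  have hQs : 0 ≤ Qs := Finset.sum_nonneg fun i _ => sq_nonneg _
  have hrp : Qs ^ ((1 : ℝ) / 2) = Real.sqrt Qs := (Real.sqrt_eq_rpow Qs).symm
  have key : S1 + Real.sqrt p * Real.sqrt Qs ≤ p * a := by
    rw [hrp] at haa
    have := mul_le_mul_of_nonneg_left haa hp0.le
    rw [← mul_assoc, mul_one_div, div_self hp0.ne', one_mul] at this
    linarith
  have hsq : 0 ≤ Real.sqrt p * Real.sqrt Qs :=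
    mul_nonneg (Real.sqrt_nonneg _) (Real.sqrt_nonneg _)
  have hS1pa : S1 ≤ p * a := by linarith
  have hQpa : Qs / a ≤ p * a := by
    have h1 : Real.sqrt Qs ≤ Real.sqrt p * a := by
      have hsp : 0 < Real.sqrt p := Real.sqrt_pos.mpr hp0
      have : Real.sqrt p * Real.sqrt Qs ≤ Real.sqrt p * (Real.sqrt p * a) := by
        rw [← mul_assoc, Real.mul_self_sqrt hp0.le]; linarith
      exact le_of_mul_le_mul_left this hsp
    have h2' : Qs ≤ p * a ^ 2 := by
      have := mul_self_le_mul_self (Real.sqrt_nonneg Qs) h1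
      rw [Real.mul_self_sqrt hQs] at this
      nlinarith [Real.sq_sqrt hp0.le, Real.sqrt_nonneg p]
    rw [div_le_iff₀ ha]
    nlinarith
  -- reindex the sum by σ
  have hre : ∑ i, ∫ ω, max (|t i * X i ω| - a) 0
      = ∑ i, ∫ ω, max (|t (σ i) * X (σ i) ω| - a) 0 :=
    (Equiv.sum_comp σ (fun i => ∫ ω, max (|t i * X i ω| - a) 0)).symm
  rw [hre]
  rw [← Finset.sum_filter_add_sum_filter_not Finset.univ (fun i : Fin n => (i : ℕ) < ⌊p⌋₊)]
  have hb1 : ∑ i ∈ Finset.univ.filter (fun i : Fin n => (i : ℕ) < ⌊p⌋₊),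
      ∫ ω, max (|t (σ i) * X (σ i) ω| - a) 0 ≤ S1 :=
    Finset.sum_le_sum fun i _ => bound1 (X (σ i)) (hX _) (h2 _) (hvar _) (t (σ i)) a ha
  have hb2 : ∑ i ∈ Finset.univ.filter (fun i : Fin n => ¬ (i : ℕ) < ⌊p⌋₊),
      ∫ ω, max (|t (σ i) * X (σ i) ω| - a) 0 ≤ Qs / a := by
    have : ∑ i ∈ Finset.univ.filter (fun i : Fin n => ¬ (i : ℕ) < ⌊p⌋₊),
        ∫ ω, max (|t (σ i) * X (σ i) ω| - a) 0
        ≤ ∑ i ∈ Finset.univ.filter (fun i : Fin n => ¬ (i : ℕ) < ⌊p⌋₊), t (σ i) ^ 2 / a :=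
      Finset.sum_le_sum fun i _ => bound2 (X (σ i)) (hX _) (h2 _) (hvar _) (t (σ i)) a ha
    calc _ ≤ ∑ i ∈ Finset.univ.filter (fun i : Fin n => ¬ (i : ℕ) < ⌊p⌋₊), t (σ i) ^ 2 / a :=
          this
      _ = Qs / a := by
          rw [hQsdef, Finset.sum_div]
          apply Finset.sum_congr
          · ext i; simp [not_lt]
          · intro i _; rw [sq_abs]
  linarith
end

section
/- Let X₁,…,Xₙ be independent real random variables with E X_i² = 1, t ∈ ℝⁿ, a > 0, p ≥ 1 with a ≥ (1/√p)·(Σ_{i>p}(t_i*)²)^{1/2}. Then Σ_{i=1}^n E min{(t_iX_i)², a²} ≤ p·a² + Σ_{i>p}(t_i*)² ≤ 2p·a². -/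
open MeasureTheory ProbabilityTheory

/-- If `E X_i² = 1` and `a ≥ (1/√p)(∑_{i>p}(t_i*)²)^{1/2}`, then
`∑ E min{(t_iX_i)², a²} ≤ p a² + ∑_{i>p}(t_i*)² ≤ 2pa²`. -/
theorem stmt10 {Ω : Type*} [MeasureSpace Ω] [IsProbabilityMeasure (ℙ : Measure Ω)]
    (n : ℕ) (X : Fin n → Ω → ℝ) (hX : ∀ i, Measurable (X i))
    (hindep : iIndepFun X)
    (h2 : ∀ i, Integrable (fun ω => X i ω ^ 2)) (hvar : ∀ i, ∫ ω, X i ω ^ 2 = 1)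
    (t : Fin n → ℝ) (σ : Equiv.Perm (Fin n))
    (hσ : ∀ i j : Fin n, i ≤ j → |t (σ j)| ≤ |t (σ i)|)
    (p a : ℝ) (hp : 1 ≤ p) (ha : 0 < a)
    (haa : (1 / Real.sqrt p) *
        (∑ i ∈ Finset.univ.filter (fun i : Fin n => ⌊p⌋₊ ≤ (i : ℕ)), |t (σ i)| ^ 2)
          ^ ((1 : ℝ) / 2) ≤ a) :
    ∑ i, ∫ ω, min ((t i * X i ω) ^ 2) (a ^ 2)
        ≤ p * a ^ 2 + ∑ i ∈ Finset.univ.filter (fun i : Fin n => ⌊p⌋₊ ≤ (i : ℕ)), |t (σ i)| ^ 2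
      ∧ p * a ^ 2 + ∑ i ∈ Finset.univ.filter (fun i : Fin n => ⌊p⌋₊ ≤ (i : ℕ)), |t (σ i)| ^ 2
        ≤ 2 * p * a ^ 2 := by
  have hp0 : (0:ℝ) < p := by linarith
  set S := ∑ i ∈ Finset.univ.filter (fun i : Fin n => ⌊p⌋₊ ≤ (i : ℕ)), |t (σ i)| ^ 2 with hSdef
  have hS0 : 0 ≤ S := Finset.sum_nonneg fun i _ => by positivity
  -- second inequality
  have hSle : S ≤ p * a ^ 2 := by
    have hsp : 0 < Real.sqrt p := Real.sqrt_pos.2 hp0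
    rw [one_div, inv_mul_le_iff₀ hsp, ← Real.sqrt_eq_rpow] at haa
    nlinarith [Real.sq_sqrt hS0, Real.sq_sqrt hp0.le, Real.sqrt_nonneg S,
      Real.sqrt_nonneg p, mul_nonneg (Real.sqrt_nonneg p) ha.le]
  -- pointwise bound on each integral
  have key : ∀ i, ∫ ω, min ((t i * X i ω) ^ 2) (a ^ 2) ≤ min (t i ^ 2) (a ^ 2) := by
    intro i
    have hmeas : Measurable fun ω => min ((t i * X i ω) ^ 2) (a ^ 2) :=
      ((measurable_const.mul (hX i)).pow_const 2).min measurable_const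
    have hint : Integrable (fun ω => min ((t i * X i ω) ^ 2) (a ^ 2)) := by
      apply Integrable.mono' (integrable_const (a ^ 2)) hmeas.aestronglyMeasurable
      filter_upwards with ω
      rw [Real.norm_eq_abs, abs_of_nonneg (le_min (by positivity) (by positivity))]
      exact min_le_right _ _
    have hsq : Integrable (fun ω => (t i * X i ω) ^ 2) := by
      have := (h2 i).const_mul (t i ^ 2)
      simpa [mul_pow] using this
    refine le_min ?_ ?_
    · calc ∫ ω, min ((t i * X i ω) ^ 2) (a ^ 2) ≤ ∫ ω, (t i * X i ω) ^ 2 :=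
        integral_mono hint hsq fun ω => min_le_left _ _
      _ = t i ^ 2 := by
          simp_rw [mul_pow]
          rw [integral_const_mul, hvar i, mul_one]
    · calc ∫ ω, min ((t i * X i ω) ^ 2) (a ^ 2) ≤ ∫ _ : Ω, a ^ 2 :=
        integral_mono hint (integrable_const _) fun ω => min_le_right _ _
      _ = a ^ 2 := by simp
  -- bound on the small-index part
  have hcard : (Finset.univ.filter (fun i : Fin n => ¬ ⌊p⌋₊ ≤ (i : ℕ))).card ≤ ⌊p⌋₊ := by
    have := Finset.card_le_card_of_injOn (fun i : Fin n => (i : ℕ))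
      (s := Finset.univ.filter (fun i : Fin n => ¬ ⌊p⌋₊ ≤ (i : ℕ))) (t := Finset.range ⌊p⌋₊)
      (fun i hi => by
        simp only [Finset.mem_filter, Finset.mem_univ, true_and, not_le] at hi
        simpa [Finset.mem_range] using hi)
      (fun x _ y _ h => Fin.val_injective h)
    simpa using this
  have hsum : ∑ i, min (t i ^ 2) (a ^ 2) ≤ p * a ^ 2 + S := by
    have hperm : ∑ i, min (t i ^ 2) (a ^ 2)
        = ∑ i, min (t (σ i) ^ 2) (a ^ 2) :=
      (Equiv.sum_comp σ fun i => min (t i ^ 2) (a ^ 2)).symm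
    rw [hperm, ← Finset.sum_filter_add_sum_filter_not Finset.univ
      (fun i : Fin n => ⌊p⌋₊ ≤ (i : ℕ))]
    have h1 : ∑ i ∈ Finset.univ.filter (fun i : Fin n => ⌊p⌋₊ ≤ (i : ℕ)),
        min (t (σ i) ^ 2) (a ^ 2) ≤ S := by
      apply Finset.sum_le_sum
      intro i _
      rw [← sq_abs (t (σ i))]
      exact min_le_left _ _
    have h2' : ∑ i ∈ Finset.univ.filter (fun i : Fin n => ¬ ⌊p⌋₊ ≤ (i : ℕ)),
        min (t (σ i) ^ 2) (a ^ 2) ≤ p * a ^ 2 := by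
      calc _ ≤ (Finset.univ.filter (fun i : Fin n => ¬ ⌊p⌋₊ ≤ (i : ℕ))).card • (a ^ 2) :=
            Finset.sum_le_card_nsmul _ _ _ fun i _ => min_le_right _ _
        _ = ((Finset.univ.filter (fun i : Fin n => ¬ ⌊p⌋₊ ≤ (i : ℕ))).card : ℝ) * a ^ 2 := by
            simp [nsmul_eq_mul]
        _ ≤ p * a ^ 2 := by
            apply mul_le_mul_of_nonneg_right _ (by positivity)
            calc ((Finset.univ.filter (fun i : Fin n => ¬ ⌊p⌋₊ ≤ (i : ℕ))).card : ℝ)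
                ≤ (⌊p⌋₊ : ℝ) := Nat.cast_le.2 hcard
              _ ≤ p := Nat.floor_le hp0.le
    linarith
  refine ⟨?_, by linarith⟩
  calc ∑ i, ∫ ω, min ((t i * X i ω) ^ 2) (a ^ 2)
      ≤ ∑ i, min (t i ^ 2) (a ^ 2) := Finset.sum_le_sum fun i _ => key i
    _ ≤ p * a ^ 2 + S := hsum
end

section
/- Let Y be a symmetric real random variable with finite moments such that ‖Y‖_q ≤ 2·(q/p)·‖Y‖_p for all q ≥ p ≥ 2r where r > 1. Then for all 2r ≥ q ≥ p ≥ 2, ‖Y‖_q ≤ (1/4)·(2^r)^4·‖Y‖_p, hence moments of Y grow regularly on [2, ∞). -/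
open MeasureTheory ProbabilityTheory

/-- If `Y` is symmetric with `‖Y‖_q ≤ 2 (q/p) ‖Y‖_p` for all `q ≥ p ≥ 2r` (`r > 1`),
then `‖Y‖_q ≤ (1/4)(2^r)⁴ ‖Y‖_p` for all `2r ≥ q ≥ p ≥ 2`. -/
theorem stmt14 {Ω : Type*} [MeasureSpace Ω] [IsProbabilityMeasure (ℙ : Measure Ω)]
    (Y : Ω → ℝ) (hY : Measurable Y)
    (hsymm : IdentDistrib Y (fun ω => -Y ω))
    (hmom : ∀ p : ℝ, 1 ≤ p → Integrable (fun ω => |Y ω| ^ p))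
    (r : ℝ) (hr : 1 < r)
    (hgrow : ∀ p q : ℝ, 2 * r ≤ p → p ≤ q →
      (∫ ω, |Y ω| ^ q) ^ (1 / q) ≤ 2 * (q / p) * (∫ ω, |Y ω| ^ p) ^ (1 / p)) :
    ∀ p q : ℝ, 2 ≤ p → p ≤ q → q ≤ 2 * r →
      (∫ ω, |Y ω| ^ q) ^ (1 / q)
        ≤ (1 / 4) * ((2 : ℝ) ^ r) ^ (4 : ℕ) * (∫ ω, |Y ω| ^ p) ^ (1 / p) := by
  have hint : ∀ t : ℝ, 0 ≤ ∫ ω, |Y ω| ^ t := fun t =>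
    integral_nonneg fun ω => Real.rpow_nonneg (abs_nonneg _) _
  have hmem : ∀ t : ℝ, 1 ≤ t → MemLp Y (ENNReal.ofReal t) ℙ := by
    intro t ht
    have ht0 : (0:ℝ) < t := by linarith
    have h0 : ENNReal.ofReal t ≠ 0 := by simp [ENNReal.ofReal_eq_zero]; linarith
    have htop : ENNReal.ofReal t ≠ ⊤ := ENNReal.ofReal_ne_top
    rw [← memLp_norm_rpow_iff hY.aestronglyMeasurable h0 htop,
        ENNReal.div_self h0 htop, memLp_one_iff_integrable]
    simpa [Real.norm_eq_abs, ENNReal.toReal_ofReal ht0.le] using hmom t ht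
  have hmono : ∀ a b : ℝ, 1 ≤ a → a ≤ b →
      (∫ ω, |Y ω| ^ a) ^ (1 / a) ≤ (∫ ω, |Y ω| ^ b) ^ (1 / b) := by
    intro a b ha hab
    have hb : (1:ℝ) ≤ b := ha.trans hab
    have ha0 : (0:ℝ) < a := by linarith
    have hb0 : (0:ℝ) < b := by linarith
    have hA := hmem a ha
    have hB := hmem b hb
    have h := eLpNorm_le_eLpNorm_of_exponent_le (μ := (ℙ : Measure Ω)) (f := Y)
      (ENNReal.ofReal_le_ofReal hab) hY.aestronglyMeasurable
    rw [hA.eLpNorm_eq_integral_rpow_norm (by simp [ENNReal.ofReal_eq_zero]; linarith)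
        ENNReal.ofReal_ne_top,
      hB.eLpNorm_eq_integral_rpow_norm (by simp [ENNReal.ofReal_eq_zero]; linarith)
        ENNReal.ofReal_ne_top] at h
    rw [ENNReal.ofReal_le_ofReal_iff
      (Real.rpow_nonneg (integral_nonneg fun ω => by positivity) _)] at h
    simpa [Real.norm_eq_abs, ENNReal.toReal_ofReal ha0.le, ENNReal.toReal_ofReal hb0.le,
      one_div] using h
  intro p q hp hpq hq2r
  have hq1 : (1:ℝ) ≤ q := by linarith
  have hp1 : (1:ℝ) < p := by linarith
  have hp0 : (0:ℝ) < p - 1 := by linarith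
  have hp2r : p ≤ 2 * r := le_trans hpq hq2r
  have h2r1 : (0:ℝ) < 2 * r - 1 := by linarith
  set s : ℝ := (2 * r - 1) * (p / (p - 1)) with hs_def
  have hs2r : 2 * r ≤ s := by
    rw [hs_def, ← mul_div_assoc, le_div_iff₀ hp0]
    nlinarith
  have hs1 : (1:ℝ) ≤ s := by linarith
  have hp' : p.HolderConjugate (p / (p - 1)) :=
    (Real.holderConjugate_iff_eq_conjExponent hp1).2 rfl
  have hmemp := hmem p (by linarith)
  have hmems := hmem s hs1
  -- Memℒp of |Y| and |Y|^(2r-1)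
  have hf : MemLp (fun ω => |Y ω|) (ENNReal.ofReal p) ℙ := by
    simpa [Real.norm_eq_abs] using hmemp.norm
  have hg : MemLp (fun ω => |Y ω| ^ (2 * r - 1)) (ENNReal.ofReal (p / (p - 1))) ℙ := by
    have h := hmems.norm_rpow_div (ENNReal.ofReal (2 * r - 1))
    rw [ENNReal.toReal_ofReal h2r1.le] at h
    have hq' : ENNReal.ofReal s / ENNReal.ofReal (2 * r - 1) = ENNReal.ofReal (p / (p - 1)) := by
      rw [← ENNReal.ofReal_div_of_pos h2r1]
      congr 1
      rw [hs_def, mul_div_cancel_left₀ _ h2r1.ne']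
    rw [hq'] at h
    simpa [Real.norm_eq_abs] using h
  have hHolder := integral_mul_le_Lp_mul_Lq_of_nonneg (μ := (ℙ : Measure Ω)) hp'
    (Filter.Eventually.of_forall fun ω => abs_nonneg _)
    (Filter.Eventually.of_forall fun ω => Real.rpow_nonneg (abs_nonneg _) _) hf hg
  have hLHS : (∫ ω, |Y ω| * |Y ω| ^ (2 * r - 1)) = ∫ ω, |Y ω| ^ (2 * r) := by
    refine integral_congr_ae (Filter.Eventually.of_forall fun ω => ?_)
    show |Y ω| * |Y ω| ^ (2 * r - 1) = |Y ω| ^ (2 * r)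
    have e : (2:ℝ) * r = 1 + (2 * r - 1) := by ring
    calc |Y ω| * |Y ω| ^ (2 * r - 1)
        = |Y ω| ^ (1:ℝ) * |Y ω| ^ (2 * r - 1) := by rw [Real.rpow_one]
      _ = |Y ω| ^ ((1:ℝ) + (2 * r - 1)) :=
          (Real.rpow_add' (abs_nonneg _) (by linarith)).symm
      _ = |Y ω| ^ (2 * r) := by rw [← e]
  have hRHS : (∫ ω, (|Y ω| ^ (2 * r - 1)) ^ (p / (p - 1))) = ∫ ω, |Y ω| ^ s := by
    refine integral_congr_ae (Filter.Eventually.of_forall fun ω => ?_)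
    show (|Y ω| ^ (2 * r - 1)) ^ (p / (p - 1)) = |Y ω| ^ s
    rw [hs_def, Real.rpow_mul (abs_nonneg _)]
  rw [hLHS, hRHS] at hHolder
  have hA0 : 0 ≤ ∫ ω, |Y ω| ^ (2 * r) := hint _
  have hB0 : 0 ≤ ∫ ω, |Y ω| ^ p := hint _
  have hC0 : 0 ≤ ∫ ω, |Y ω| ^ s := hint _
  set A := ∫ ω, |Y ω| ^ (2 * r) with hA
  set B := ∫ ω, |Y ω| ^ p with hB
  set C := ∫ ω, |Y ω| ^ s with hC
  set N := A ^ (1 / (2 * r)) with hN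
  have hN0 : 0 ≤ N := Real.rpow_nonneg hA0 _
  have hgr := hgrow (2 * r) s le_rfl hs2r
  rw [← hA, ← hC, ← hN] at hgr
  -- coefficient bound
  have hdiv2 : p / (p - 1) ≤ 2 := by rw [div_le_iff₀ hp0]; linarith
  have hs4r : s ≤ 4 * r := by
    calc s ≤ (2 * r - 1) * 2 := mul_le_mul_of_nonneg_left hdiv2 h2r1.le
      _ ≤ 4 * r := by linarith
  have hr0 : (0:ℝ) < r := by linarith
  have hcoef : 2 * (s / (2 * r)) ≤ 4 := by
    have he : 2 * (s / (2 * r)) = s / r := by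
      field_simp
    rw [he, div_le_iff₀ hr0]; linarith
  have hCs : C ^ (1 / s) ≤ 4 * N :=
    hgr.trans (by
      have := mul_le_mul_of_nonneg_right hcoef hN0
      linarith)
  have hexp : (1 / s) * (2 * r - 1) = 1 / (p / (p - 1)) := by
    rw [hs_def]
    have hpne : p ≠ 0 := by linarith
    field_simp
  have hCC : C ^ (1 / (p / (p - 1))) ≤ (4 * N) ^ (2 * r - 1) := by
    rw [← hexp, Real.rpow_mul hC0]
    exact Real.rpow_le_rpow (Real.rpow_nonneg hC0 _) hCs h2r1.le
  have key : A ≤ B ^ (1 / p) * ((4:ℝ) ^ (2 * r - 1) * N ^ (2 * r - 1)) := by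
    calc A ≤ B ^ (1 / p) * C ^ (1 / (p / (p - 1))) := hHolder
      _ ≤ B ^ (1 / p) * (4 * N) ^ (2 * r - 1) :=
          mul_le_mul_of_nonneg_left hCC (Real.rpow_nonneg hB0 _)
      _ = _ := by rw [Real.mul_rpow (by norm_num) hN0]
  have hconst : (4:ℝ) ^ (2 * r - 1) = (1 / 4) * ((2 : ℝ) ^ r) ^ (4 : ℕ) := by
    have e1 : ((2:ℝ) ^ r) ^ (4 : ℕ) = (2:ℝ) ^ (r * (4:ℝ)) := by
      rw [← Real.rpow_natCast ((2:ℝ) ^ r) 4, ← Real.rpow_mul (by norm_num : (0:ℝ) ≤ 2)]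
      norm_num
    have e2 : (4:ℝ) ^ (2 * r - 1) = (2:ℝ) ^ ((2:ℝ) * (2 * r - 1)) := by
      rw [Real.rpow_mul (by norm_num : (0:ℝ) ≤ 2)]
      congr 1
      rw [Real.rpow_two]; norm_num
    rw [e1, e2, show r * (4:ℝ) = (2:ℝ) * (2 * r - 1) + 2 by ring,
      Real.rpow_add (by norm_num : (0:ℝ) < 2), Real.rpow_two]
    ring
  have hmonoq : (∫ ω, |Y ω| ^ q) ^ (1 / q) ≤ N := by
    have := hmono q (2 * r) hq1 hq2r
    rwa [← hA, ← hN] at this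
  rcases eq_or_lt_of_le hN0 with hNz | hNpos
  · -- N = 0
    have hle0 : (∫ ω, |Y ω| ^ q) ^ (1 / q) ≤ 0 := by rw [hNz]; exact hmonoq
    refine hle0.trans ?_
    have : (0:ℝ) ≤ (1 / 4) * ((2 : ℝ) ^ r) ^ (4 : ℕ) := by positivity
    exact mul_nonneg this (Real.rpow_nonneg hB0 _)
  · have hNpow : 0 < N ^ (2 * r - 1) := Real.rpow_pos_of_pos hNpos _
    have hNA : N ^ (2 * r - 1) * N = A := by
      have h1 : N ^ (2 * r - 1) * N ^ (1:ℝ) = N ^ ((2 * r - 1) + 1) :=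
        (Real.rpow_add hNpos _ _).symm
      rw [Real.rpow_one] at h1
      rw [h1, show (2 * r - 1) + 1 = 2 * r by ring, hN, ← Real.rpow_mul hA0,
        one_div, inv_mul_cancel₀ (ne_of_gt (by linarith : (0:ℝ) < 2 * r)), Real.rpow_one]
    have hNle : N ≤ (4:ℝ) ^ (2 * r - 1) * B ^ (1 / p) := by
      have h1 : N ^ (2 * r - 1) * N ≤ N ^ (2 * r - 1) * ((4:ℝ) ^ (2 * r - 1) * B ^ (1 / p)) := by
        rw [hNA]
        calc A ≤ B ^ (1 / p) * ((4:ℝ) ^ (2 * r - 1) * N ^ (2 * r - 1)) := key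
          _ = N ^ (2 * r - 1) * ((4:ℝ) ^ (2 * r - 1) * B ^ (1 / p)) := by ring
      exact le_of_mul_le_mul_left h1 hNpow
    calc (∫ ω, |Y ω| ^ q) ^ (1 / q) ≤ N := hmonoq
      _ ≤ (4:ℝ) ^ (2 * r - 1) * B ^ (1 / p) := hNle
      _ = (1 / 4) * ((2 : ℝ) ^ r) ^ (4 : ℕ) * B ^ (1 / p) := by rw [hconst]
end
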